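/- arXiv:1503.02331 — 7 statements merged into one kernel-verified Lean document; each statement's English description precedes it below -/
import Mathlib

section
/- For every t ∈ ℝ one has log ω_t = log ω + e^{-itH}·(∫₀^t σ_s ds)·e^{itH}; equivalently, for every t ≠ 0, log ω_t = log ω + t·τ^{-t}(Σ^t). (Here log ω_t is the functional-calculus logarithm of the positive-definite matrix ω_t.) -/
open Matrix MeasureTheory Filter Topology
open scoped ComplexOrder

/-- Functional calculus for a Hermitian complex matrix: apply `f : ℝ → ℝ` to the eigenvalues
(junk value `0` if the matrix is not Hermitian). -/
noncomputable def matCFC {n : ℕ} (f : ℝ → ℝ) (A : Matrix (Fin n) (Fin n) ℂ) :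
    Matrix (Fin n) (Fin n) ℂ :=
  if h : A.IsHermitian then h.cfc f else 0

/-- Functional-calculus logarithm of a (positive-definite Hermitian) matrix. -/
noncomputable def mlog {n : ℕ} (A : Matrix (Fin n) (Fin n) ℂ) : Matrix (Fin n) (Fin n) ℂ :=
  matCFC Real.log A

/-- Functional-calculus real power of a (positive-definite Hermitian) matrix. -/
noncomputable def mpow {n : ℕ} (A : Matrix (Fin n) (Fin n) ℂ) (q : ℝ) :
    Matrix (Fin n) (Fin n) ℂ :=
  matCFC (fun x => x ^ q) A

/-- Matrix exponential. -/
noncomputable def mexp {n : ℕ} (A : Matrix (Fin n) (Fin n) ℂ) : Matrix (Fin n) (Fin n) ℂ :=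
  NormedSpace.exp A

/-- Heisenberg evolution `τ^t(A) = e^{itH} A e^{-itH}`. -/
noncomputable def heisenberg {n : ℕ} (H : Matrix (Fin n) (Fin n) ℂ) (t : ℝ)
    (A : Matrix (Fin n) (Fin n) ℂ) : Matrix (Fin n) (Fin n) ℂ :=
  mexp ((Complex.I * t) • H) * A * mexp ((-(Complex.I * t)) • H)

/-- Schrödinger evolution of the state, `ω_t = e^{-itH} ω e^{itH}`. -/
noncomputable def stateT {n : ℕ} (H ω : Matrix (Fin n) (Fin n) ℂ) (t : ℝ) :
    Matrix (Fin n) (Fin n) ℂ :=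
  mexp ((-(Complex.I * t)) • H) * ω * mexp ((Complex.I * t) • H)

/-- Entropy production observable `σ = -i (H log ω - log ω H)`. -/
noncomputable def entropyProd {n : ℕ} (H ω : Matrix (Fin n) (Fin n) ℂ) :
    Matrix (Fin n) (Fin n) ℂ :=
  (-Complex.I) • (H * mlog ω - mlog ω * H)

/-- `σ_s = τ^s(σ)`. -/
noncomputable def sigmaAt {n : ℕ} (H ω : Matrix (Fin n) (Fin n) ℂ) (s : ℝ) :
    Matrix (Fin n) (Fin n) ℂ :=
  heisenberg H s (entropyProd H ω)

/-- `∫₀^t σ_s ds` (entrywise integral). -/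
noncomputable def intSigma {n : ℕ} (H ω : Matrix (Fin n) (Fin n) ℂ) (t : ℝ) :
    Matrix (Fin n) (Fin n) ℂ :=
  Matrix.of fun i j => ∫ s in (0:ℝ)..t, sigmaAt H ω s i j

/-- Mean entropy production rate `Σ^t = (1/t) ∫₀^t σ_s ds`. -/
noncomputable def meanSigma {n : ℕ} (H ω : Matrix (Fin n) (Fin n) ℂ) (t : ℝ) :
    Matrix (Fin n) (Fin n) ℂ :=
  ((t : ℂ)⁻¹) • intSigma H ω t

/-- The Evans–Searles functional `ES_t(α) = log tr(ω e^{-α ∫₀^t σ_s ds})`. -/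
noncomputable def ES {n : ℕ} (H ω : Matrix (Fin n) (Fin n) ℂ) (t α : ℝ) : ℝ :=
  Real.log ((Matrix.trace (ω * mexp ((-α) • intSigma H ω t))).re)

/-- The entropic pressure functional `e_{p,t}(α)` for `0 < p < ∞`. -/
noncomputable def ePressure {n : ℕ} (H ω : Matrix (Fin n) (Fin n) ℂ) (p t α : ℝ) : ℝ :=
  Real.log ((Matrix.trace (mpow
    (mpow ω ((1 - α)/p) * mpow (stateT H ω t) (2*α/p) * mpow ω ((1 - α)/p)) (p/2))).re)

/-- The entropic pressure functional `e_{∞,t}(α)`. -/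
noncomputable def ePressureInf {n : ℕ} (H ω : Matrix (Fin n) (Fin n) ℂ) (t α : ℝ) : ℝ :=
  Real.log ((Matrix.trace (mexp ((1 - α) • mlog ω + α • mlog (stateT H ω t)))).re)

namespace Stmt0Aux

open NormedSpace Matrix

variable {n : ℕ}

/-- Conjugation by a unitary as a star algebra homomorphism. -/
noncomputable def conjSAH (U : Matrix (Fin n) (Fin n) ℂ)
    (hU : U ∈ unitary (Matrix (Fin n) (Fin n) ℂ)) :
    Matrix (Fin n) (Fin n) ℂ →⋆ₐ[ℂ] Matrix (Fin n) (Fin n) ℂ where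
  toFun A := U * A * star U
  map_one' := by simpa using (Unitary.mem_iff.mp hU).2
  map_mul' A B := by
    have h : star U * U = 1 := (Unitary.mem_iff.mp hU).1
    calc U * (A * B) * star U = U * A * (star U * U) * B * star U := by
          rw [h]; noncomm_ring
      _ = U * A * star U * (U * B * star U) := by noncomm_ring
  map_zero' := by simp
  map_add' A B := by noncomm_ring
  commutes' r := by
    have h2 : U * star U = 1 := (Unitary.mem_iff.mp hU).2
    simp [Algebra.algebraMap_eq_smul_one, smul_mul_assoc, mul_smul_comm, h2]
  map_star' A := by simp [StarMul.star_mul, mul_assoc]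

lemma conjSAH_apply (U : Matrix (Fin n) (Fin n) ℂ) (hU : U ∈ unitary _)
    (A : Matrix (Fin n) (Fin n) ℂ) : conjSAH U hU A = U * A * star U := rfl

noncomputable def E (H : Matrix (Fin n) (Fin n) ℂ) (t : ℝ) : Matrix (Fin n) (Fin n) ℂ :=
  mexp ((Complex.I * t) • H)

lemma mexp_neg_smul (H : Matrix (Fin n) (Fin n) ℂ) (t : ℝ) :
    mexp ((-(Complex.I * t)) • H) = E H (-t) := by
  rw [E]; congr 1; push_cast; ring_nf

lemma E_add (H : Matrix (Fin n) (Fin n) ℂ) (s t : ℝ) : E H s * E H t = E H (s + t) := by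
  rw [E, E, E, mexp, mexp, mexp, ← Matrix.exp_add_of_commute]
  · congr 1
    rw [← add_smul, show Complex.I * (s:ℂ) + Complex.I * (t:ℂ) = Complex.I * ((s+t:ℝ):ℂ) by push_cast; ring]
  · exact ((Commute.refl H).smul_left _).smul_right _

lemma E_zero (H : Matrix (Fin n) (Fin n) ℂ) : E H 0 = 1 := by
  simp [E, mexp, NormedSpace.exp_zero]

lemma E_mul_E_neg (H : Matrix (Fin n) (Fin n) ℂ) (t : ℝ) : E H t * E H (-t) = 1 := by
  rw [E_add]; simp [E_zero]

lemma star_E {H : Matrix (Fin n) (Fin n) ℂ} (hH : H.IsHermitian) (t : ℝ) :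
    star (E H t) = E H (-t) := by
  rw [E, E, mexp, mexp, Matrix.star_eq_conjTranspose, ← Matrix.exp_conjTranspose]
  congr 1
  rw [conjTranspose_smul, hH.eq]
  push_cast
  simp [Complex.star_def, Complex.conj_I]

lemma E_unitary {H : Matrix (Fin n) (Fin n) ℂ} (hH : H.IsHermitian) (t : ℝ) :
    E H t ∈ unitary (Matrix (Fin n) (Fin n) ℂ) := by
  rw [Unitary.mem_iff, star_E hH]
  constructor
  · rw [E_add]; simp [E_zero]
  · rw [E_add]; simp [E_zero]


lemma mlog_eq {A : Matrix (Fin n) (Fin n) ℂ} (hA : A.IsHermitian) :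
    mlog A = cfc Real.log A := by
  rw [mlog, matCFC, dif_pos hA, hA.cfc_eq]

lemma log_contOn {ω : Matrix (Fin n) (Fin n) ℂ} (hω : ω.PosDef) :
    ContinuousOn Real.log (spectrum ℝ ω) := by
  apply Real.continuousOn_log.mono
  rw [hω.isHermitian.spectrum_real_eq_range_eigenvalues]
  rintro x ⟨i, rfl⟩
  exact (hω.eigenvalues_pos i).ne'

lemma mlog_conj (H ω : Matrix (Fin n) (Fin n) ℂ) (hH : H.IsHermitian) (hω : ω.PosDef)
    (t : ℝ) : mlog (stateT H ω t) = E H (-t) * mlog ω * E H t := by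
  have hU := E_unitary hH (-t)
  have hstU : star (E H (-t)) = E H t := by rw [star_E hH, neg_neg]
  have hst : stateT H ω t = conjSAH (E H (-t)) hU ω := by
    rw [conjSAH_apply, hstU, stateT, mexp_neg_smul]; rfl
  have hsa : IsSelfAdjoint ω := hω.1.isSelfAdjoint
  have hcont : Continuous (conjSAH (E H (-t)) hU) := by
    show Continuous fun A : Matrix (Fin n) (Fin n) ℂ => E H (-t) * A * star (E H (-t))
    exact (continuous_const.matrix_mul continuous_id).matrix_mul continuous_const
  have hφa : IsSelfAdjoint (conjSAH (E H (-t)) hU ω) := hsa.map _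
  have key := StarAlgHomClass.map_cfc (S := ℂ) (conjSAH (E H (-t)) hU) Real.log ω
    (log_contOn hω) hcont hsa hφa
  have hBH : (stateT H ω t).IsHermitian := by
    rw [Matrix.IsHermitian, ← Matrix.star_eq_conjTranspose, hst]; exact hφa
  rw [mlog_eq hBH, hst, ← key, mlog_eq hω.1, conjSAH_apply, hstU]


section Deriv

attribute [local instance] Matrix.linftyOpNormedAddCommGroup Matrix.linftyOpNormedRing
  Matrix.linftyOpNormedAlgebra

lemma entry_nnnorm_le (X : Matrix (Fin n) (Fin n) ℂ) (i j : Fin n) : ‖X i j‖₊ ≤ ‖X‖₊ := by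
  rw [Matrix.linfty_opNNNorm_def]
  calc ‖X i j‖₊ ≤ ∑ k, ‖X i k‖₊ :=
        Finset.single_le_sum (f := fun k => ‖X i k‖₊) (fun _ _ => zero_le) (Finset.mem_univ j)
    _ ≤ _ := Finset.le_sup (f := fun r => ∑ k, ‖X r k‖₊) (Finset.mem_univ i)

noncomputable def entryCLM (i j : Fin n) : Matrix (Fin n) (Fin n) ℂ →L[ℝ] ℂ :=
  LinearMap.mkContinuous
    { toFun := fun X => X i j, map_add' := fun _ _ => rfl, map_smul' := fun _ _ => rfl } 1
    (fun X => by rw [one_mul]; exact_mod_cast entry_nnnorm_le X i j)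

lemma expR_eq (A : Matrix (Fin n) (Fin n) ℂ) : exp A = mexp A :=
  rfl

lemma real_smul_eq (u : ℝ) (H : Matrix (Fin n) (Fin n) ℂ) :
    u • (Complex.I • H) = (Complex.I * u) • H := by
  rw [← algebraMap_smul ℂ u (Complex.I • H), smul_smul]
  congr 1
  simp [Complex.coe_algebraMap, mul_comm]

lemma hasDerivAt_E (H : Matrix (Fin n) (Fin n) ℂ) (s : ℝ) :
    HasDerivAt (fun u : ℝ => E H u) (Complex.I • H * E H s) s := by
  have h := hasDerivAt_exp_smul_const' (𝕂 := ℝ) (Complex.I • H) s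
  simp only [real_smul_eq, expR_eq] at h
  exact h

lemma hasDerivAt_E_neg (H : Matrix (Fin n) (Fin n) ℂ) (s : ℝ) :
    HasDerivAt (fun u : ℝ => E H (-u)) (-(Complex.I • H * E H (-s))) s := by
  have h := (hasDerivAt_E H (-s)).scomp s (hasDerivAt_neg s)
  exact h.congr_deriv (by simp)

lemma H_comm_E (H : Matrix (Fin n) (Fin n) ℂ) (s : ℝ) : H * E H s = E H s * H := by
  have h : Commute H (E H s) := ((Commute.refl H).smul_right (Complex.I * s)).exp_right
  exact h.eq

lemma sigmaAt_eq (H ω : Matrix (Fin n) (Fin n) ℂ) (s : ℝ) :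
    sigmaAt H ω s = E H s * entropyProd H ω * E H (-s) := by
  rw [sigmaAt, heisenberg, mexp_neg_smul]; rfl

lemma hasDerivAt_G (H ω : Matrix (Fin n) (Fin n) ℂ) (s : ℝ) :
    HasDerivAt (fun u : ℝ => E H u * mlog ω * E H (-u)) (-(sigmaAt H ω s)) s := by
  have h := ((hasDerivAt_E H s).mul_const (mlog ω)).mul (hasDerivAt_E_neg H s)
  refine h.congr_deriv ?_
  have hc : H * E H s = E H s * H := H_comm_E H s
  rw [sigmaAt_eq, entropyProd]
  set A := E H s with hA
  set B := E H (-s) with hB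
  rw [show Complex.I • H * A = A * (Complex.I • H) by rw [smul_mul_assoc, mul_smul_comm, hc]]
  simp only [neg_smul, mul_neg, neg_neg, mul_smul_comm, smul_mul_assoc, smul_sub, mul_sub,
    sub_mul, mul_assoc, sub_eq_add_neg, neg_mul, add_mul, mul_add, smul_add, neg_add_rev, neg_neg]
  module

lemma cont_E (H : Matrix (Fin n) (Fin n) ℂ) : Continuous fun s : ℝ => E H s :=
  continuous_iff_continuousAt.mpr fun s => (hasDerivAt_E H s).continuousAt

lemma cont_sigma_entry (H ω : Matrix (Fin n) (Fin n) ℂ) (i j : Fin n) :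
    Continuous fun s : ℝ => sigmaAt H ω s i j := by
  have h : Continuous fun s : ℝ => E H s * entropyProd H ω * E H (-s) :=
    ((cont_E H).mul continuous_const).mul ((cont_E H).comp continuous_neg)
  simp only [sigmaAt_eq]
  exact (entryCLM i j).continuous.comp h

lemma intSigma_eq (H ω : Matrix (Fin n) (Fin n) ℂ) (t : ℝ) :
    intSigma H ω t = mlog ω - E H t * mlog ω * E H (-t) := by
  ext i j
  have hd : ∀ s ∈ Set.uIcc (0:ℝ) t,
      HasDerivAt (fun u : ℝ => (E H u * mlog ω * E H (-u)) i j) (-(sigmaAt H ω s i j)) s := by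
    intro s _
    have h := (entryCLM i j).hasFDerivAt.comp_hasDerivAt s (hasDerivAt_G H ω s)
    exact h
  have hint : IntervalIntegrable (fun s => -(sigmaAt H ω s i j)) MeasureTheory.volume 0 t :=
    ((cont_sigma_entry H ω i j).neg).intervalIntegrable _ _
  have hFTC := intervalIntegral.integral_eq_sub_of_hasDerivAt hd hint
  have key : ∫ s in (0:ℝ)..t, sigmaAt H ω s i j
      = (E H 0 * mlog ω * E H (-0)) i j - (E H t * mlog ω * E H (-t)) i j := by
    rw [← neg_neg (∫ s in (0:ℝ)..t, sigmaAt H ω s i j), ← intervalIntegral.integral_neg, hFTC]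
    ring
  have h1 : intSigma H ω t i j = ∫ s in (0:ℝ)..t, sigmaAt H ω s i j := rfl
  rw [h1, key, Matrix.sub_apply]
  simp [E_zero]

end Deriv

end Stmt0Aux

open Stmt0Aux in
/-- `log ω_t = log ω + e^{-itH} (∫₀^t σ_s ds) e^{itH}`; equivalently for `t ≠ 0`,
`log ω_t = log ω + t τ^{-t}(Σ^t)`. -/
theorem stmt0 {n : ℕ} (H ω : Matrix (Fin n) (Fin n) ℂ)
    (hH : H.IsHermitian) (hω : ω.PosDef) (htr : ω.trace = 1) :
    (∀ t : ℝ, mlog (stateT H ω t)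
        = mlog ω + mexp ((-(Complex.I * t)) • H) * intSigma H ω t * mexp ((Complex.I * t) • H)) ∧
    (∀ t : ℝ, t ≠ 0 → mlog (stateT H ω t)
        = mlog ω + (t : ℂ) • heisenberg H (-t) (meanSigma H ω t)) := by
  have hpart1 : ∀ t : ℝ, mlog (stateT H ω t)
      = mlog ω + mexp ((-(Complex.I * t)) • H) * intSigma H ω t * mexp ((Complex.I * t) • H) := by
    intro t
    have hmul : E H (-t) * E H t = 1 := by
      rw [E_add]; simp [E_zero]
    rw [mlog_conj H ω hH hω t, mexp_neg_smul, intSigma_eq H ω t]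
    have e0 : mexp ((Complex.I * (t:ℝ)) • H) = E H t := rfl
    rw [e0, mul_sub, sub_mul]
    have h2 : E H (-t) * (E H t * mlog ω * E H (-t)) * E H t = mlog ω := by
      calc E H (-t) * (E H t * mlog ω * E H (-t)) * E H t
          = (E H (-t) * E H t) * mlog ω * (E H (-t) * E H t) := by noncomm_ring
        _ = mlog ω := by rw [hmul, one_mul, mul_one]
    rw [h2]
    abel
  refine ⟨hpart1, fun t ht => ?_⟩
  rw [hpart1 t, heisenberg, meanSigma]
  have e1 : mexp ((Complex.I * ((-t : ℝ) : ℂ)) • H) = E H (-t) := rfl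
  have e2 : mexp ((-(Complex.I * ((-t : ℝ) : ℂ))) • H) = E H t := by
    rw [mexp_neg_smul, neg_neg]
  rw [e1, e2, mexp_neg_smul, show mexp ((Complex.I * (t:ℝ)) • H) = E H t from rfl]
  congr 1
  rw [mul_smul_comm, smul_mul_assoc, smul_smul]
  rw [mul_inv_cancel₀ (by exact_mod_cast ht : (t:ℂ) ≠ 0), one_smul]
end

section
/- For every t ∈ ℝ one has S(ω_t|ω) = -∫₀^t tr(ω·σ_s) ds; equivalently, for every t ≠ 0, S(ω_t|ω) = -t·tr(ω·Σ^t). -/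
open Matrix MeasureTheory Filter Topology
open scoped ComplexOrder

/-! ### Auxiliary lemmas -/

section Aux

variable {n : ℕ}

lemma isHermitian_conj {U A : Matrix (Fin n) (Fin n) ℂ} (hA : A.IsHermitian) :
    (U * A * star U).IsHermitian := by
  simp only [Matrix.IsHermitian, Matrix.star_eq_conjTranspose, conjTranspose_mul,
    conjTranspose_conjTranspose, mul_assoc, hA.eq]

/-- Conjugation by a unitary matrix as a star-algebra homomorphism. -/
noncomputable def conjSAH (U : Matrix (Fin n) (Fin n) ℂ) (h1 : U * star U = 1)
    (h2 : star U * U = 1) : Matrix (Fin n) (Fin n) ℂ →⋆ₐ[ℂ] Matrix (Fin n) (Fin n) ℂ where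
  toFun A := U * A * star U
  map_one' := by show U * 1 * star U = 1; rw [mul_one, h1]
  map_mul' A B := by
    have hmid : ∀ X : Matrix (Fin n) (Fin n) ℂ, star U * (U * X) = X := fun X => by
      rw [← mul_assoc, h2, one_mul]
    simp only [mul_assoc, hmid]
  map_zero' := by simp
  map_add' A B := by noncomm_ring
  commutes' c := by
    simp only [Algebra.algebraMap_eq_smul_one, Matrix.mul_smul, mul_one, Matrix.smul_mul, h1]
  map_star' A := by simp only [Matrix.star_mul, star_star, mul_assoc]

lemma conjSAH_continuous (U : Matrix (Fin n) (Fin n) ℂ) (h1 : U * star U = 1)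
    (h2 : star U * U = 1) : Continuous (conjSAH U h1 h2) := by
  show Continuous fun A : Matrix (Fin n) (Fin n) ℂ => U * A * star U
  exact (continuous_const.matrix_mul continuous_id).matrix_mul continuous_const

lemma matCFC_conj (f : ℝ → ℝ) (U A : Matrix (Fin n) (Fin n) ℂ)
    (h1 : U * star U = 1) (h2 : star U * U = 1) (hA : A.IsHermitian) :
    matCFC f (U * A * star U) = U * matCFC f A * star U := by
  have hA' : (U * A * star U).IsHermitian := isHermitian_conj hA
  rw [matCFC, matCFC, dif_pos hA, dif_pos hA', ← Matrix.IsHermitian.cfc_eq,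
    ← Matrix.IsHermitian.cfc_eq]
  have hsa : IsSelfAdjoint A := hA
  have hsa' : IsSelfAdjoint ((conjSAH U h1 h2) A) := hA'
  have := StarAlgHom.map_cfc (conjSAH U h1 h2) f A
    (hf := (Matrix.finite_real_spectrum (A := A)).continuousOn _)
    (hφ := conjSAH_continuous U h1 h2) (ha := hsa) (hφa := hsa')
  simpa [conjSAH] using this.symm

lemma star_mexpU (H : Matrix (Fin n) (Fin n) ℂ) (hH : H.IsHermitian) (t : ℝ) :
    star (mexp ((-(Complex.I * t)) • H)) = mexp ((Complex.I * t) • H) := by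
  unfold mexp
  rw [Matrix.star_eq_conjTranspose, ← Matrix.exp_conjTranspose]
  congr 1
  rw [Matrix.conjTranspose_smul, hH.eq]
  congr 1
  simp [Complex.star_def, Complex.conj_ofReal]

lemma mexpU_mul_mexpV (H : Matrix (Fin n) (Fin n) ℂ) (t : ℝ) :
    mexp ((-(Complex.I * t)) • H) * mexp ((Complex.I * t) • H) = 1 := by
  unfold mexp
  have h := Matrix.exp_add_of_commute ((-(Complex.I * t)) • H) ((Complex.I * t) • H)
    (((Commute.refl H).smul_left _).smul_right _)
  rw [← add_smul] at h
  simp only [neg_add_cancel, zero_smul, NormedSpace.exp_zero] at h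
  exact h.symm

lemma mexpV_mul_mexpU (H : Matrix (Fin n) (Fin n) ℂ) (t : ℝ) :
    mexp ((Complex.I * t) • H) * mexp ((-(Complex.I * t)) • H) = 1 := by
  unfold mexp
  have h := Matrix.exp_add_of_commute ((Complex.I * t) • H) ((-(Complex.I * t)) • H)
    (((Commute.refl H).smul_left _).smul_right _)
  rw [← add_smul] at h
  simp only [add_neg_cancel, zero_smul, NormedSpace.exp_zero] at h
  exact h.symm

lemma mlog_stateT (H ω : Matrix (Fin n) (Fin n) ℂ) (hH : H.IsHermitian)
    (hω : ω.IsHermitian) (t : ℝ) :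
    mlog (stateT H ω t)
      = mexp ((-(Complex.I * t)) • H) * mlog ω * mexp ((Complex.I * t) • H) := by
  have hs := star_mexpU H hH t
  unfold stateT mlog
  rw [← hs]
  exact matCFC_conj _ _ _ (by rw [hs]; exact mexpU_mul_mexpV H t)
    (by rw [hs]; exact mexpV_mul_mexpU H t) hω

lemma trace_stateT_mlog (H ω : Matrix (Fin n) (Fin n) ℂ) (hH : H.IsHermitian)
    (hω : ω.IsHermitian) (t : ℝ) :
    Matrix.trace (stateT H ω t * mlog (stateT H ω t)) = Matrix.trace (ω * mlog ω) := by
  rw [mlog_stateT H ω hH hω]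
  unfold stateT
  set U := mexp ((-(Complex.I * t)) • H) with hU
  set V := mexp ((Complex.I * t) • H) with hV
  have hVU : V * U = 1 := mexpV_mul_mexpU H t
  have hmid : ∀ X : Matrix (Fin n) (Fin n) ℂ, V * (U * X) = X := fun X => by
    rw [← mul_assoc, hVU, one_mul]
  simp only [mul_assoc, hmid]
  rw [Matrix.trace_mul_comm U]
  simp only [mul_assoc, hVU, mul_one]

lemma csmul_eq (c : ℂ) (s : ℝ) (H : Matrix (Fin n) (Fin n) ℂ) :
    (c * (s : ℂ)) • H = s • (c • H) := by
  rw [mul_comm, mul_smul]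
  norm_num [← Complex.coe_algebraMap, algebraMap_smul]

lemma stateT_exp (H ω : Matrix (Fin n) (Fin n) ℂ) (t : ℝ) :
    stateT H ω t = NormedSpace.exp (t • ((-Complex.I) • H)) * ω
      * NormedSpace.exp (t • (Complex.I • H)) := by
  have h1 : (-(Complex.I * (t : ℂ))) • H = t • ((-Complex.I) • H) := by
    rw [← csmul_eq]; congr 1; ring
  have h2 : ((Complex.I * (t : ℂ))) • H = t • (Complex.I • H) := csmul_eq _ _ _
  rw [stateT, mexp, mexp, h1, h2]

lemma sigmaAt_exp (H ω : Matrix (Fin n) (Fin n) ℂ) (s : ℝ) :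
    sigmaAt H ω s = NormedSpace.exp (s • (Complex.I • H))
      * ((-Complex.I) • (H * mlog ω - mlog ω * H)) * NormedSpace.exp (s • ((-Complex.I) • H)) := by
  have h1 : (-(Complex.I * (s : ℂ))) • H = s • ((-Complex.I) • H) := by
    rw [← csmul_eq]; congr 1; ring
  have h2 : ((Complex.I * (s : ℂ))) • H = s • (Complex.I • H) := csmul_eq _ _ _
  rw [sigmaAt, heisenberg, entropyProd, mexp, mexp, h1, h2]

lemma deriv_trace_eq (H ω L E Ec : Matrix (Fin n) (Fin n) ℂ) (hE : H * E = E * H) :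
    Matrix.trace ((E * ((-Complex.I) • H) * ω * Ec + E * ω * (Ec * (Complex.I • H))) * L)
      = - Matrix.trace (ω * (Ec * ((-Complex.I) • (H * L - L * H)) * E)) := by
  have c1 : Matrix.trace (E * (H * (ω * (Ec * L)))) = Matrix.trace (ω * (Ec * (L * (H * E)))) := by
    rw [show E * (H * (ω * (Ec * L))) = (E * H) * (ω * (Ec * L)) by simp only [mul_assoc], ← hE,
      Matrix.trace_mul_comm]
    simp only [mul_assoc]
  have c2 : Matrix.trace (E * (ω * (Ec * (H * L)))) = Matrix.trace (ω * (Ec * (H * (L * E)))) := by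
    rw [Matrix.trace_mul_comm]
    simp only [mul_assoc]
  simp only [Matrix.smul_mul, Matrix.mul_smul, smul_sub, Matrix.mul_sub, Matrix.sub_mul,
    Matrix.add_mul, Matrix.trace_add, Matrix.trace_sub, Matrix.trace_smul, smul_eq_mul,
    mul_assoc, neg_smul, Matrix.trace_neg, neg_sub, neg_neg, mul_neg, neg_mul]
  rw [c1, c2]
  ring

end Aux

section Deriv

attribute [local instance] Matrix.linftyOpNormedAddCommGroup Matrix.linftyOpNormedRing
  Matrix.linftyOpNormedAlgebra

variable {n : ℕ}

lemma hasDerivAt_expc (B : Matrix (Fin n) (Fin n) ℂ) (t : ℝ) :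
    HasDerivAt (fun s : ℝ => NormedSpace.exp (s • B)) (NormedSpace.exp (t • B) * B) t := by
  have h := hasDerivAt_exp_smul_const (𝕂 := ℝ) B t
  exact h

lemma continuous_expc (B : Matrix (Fin n) (Fin n) ℂ) :
    Continuous fun s : ℝ => NormedSpace.exp (s • B) :=
  NormedSpace.exp_continuous.comp (continuous_id.smul continuous_const)

noncomputable def traceCLMr (n : ℕ) : Matrix (Fin n) (Fin n) ℂ →L[ℝ] ℂ :=
  LinearMap.toContinuousLinearMap ((Matrix.traceLinearMap (Fin n) ℂ ℂ).restrictScalars ℝ)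

lemma traceCLMr_apply (A : Matrix (Fin n) (Fin n) ℂ) : traceCLMr n A = Matrix.trace A := rfl

lemma HasDerivAt.mtrace {f : ℝ → Matrix (Fin n) (Fin n) ℂ} {f' : Matrix (Fin n) (Fin n) ℂ}
    {t : ℝ} (h : HasDerivAt f f' t) :
    HasDerivAt (fun s => Matrix.trace (f s)) (Matrix.trace f') t := by
  have := (traceCLMr n).hasFDerivAt.comp_hasDerivAt t h
  exact this

lemma hasDerivAt_g (B C ω L : Matrix (Fin n) (Fin n) ℂ) (t : ℝ) :
    HasDerivAt
      (fun s : ℝ => Matrix.trace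
        (NormedSpace.exp (s • B) * ω * NormedSpace.exp (s • C) * L))
      (Matrix.trace
        ((NormedSpace.exp (t • B) * B * ω * NormedSpace.exp (t • C)
          + NormedSpace.exp (t • B) * ω * (NormedSpace.exp (t • C) * C)) * L)) t := by
  have hU := hasDerivAt_expc B t
  have hV := hasDerivAt_expc C t
  have hm := ((hU.mul_const ω).mul hV).mul_const L
  have := hm.mtrace
  convert this using 2
  rfl

lemma hasDerivAt_main (H ω : Matrix (Fin n) (Fin n) ℂ) (s : ℝ) :
    HasDerivAt (fun u : ℝ => Matrix.trace (stateT H ω u * mlog ω))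
      (-(Matrix.trace (ω * sigmaAt H ω s))) s := by
  have hE : H * NormedSpace.exp (s • ((-Complex.I) • H))
      = NormedSpace.exp (s • ((-Complex.I) • H)) * H :=
    ((((Commute.refl H).smul_right (-Complex.I)).smul_right s).exp_right)
  have h := hasDerivAt_g ((-Complex.I) • H) (Complex.I • H) ω (mlog ω) s
  have hval := deriv_trace_eq H ω (mlog ω) (NormedSpace.exp (s • ((-Complex.I) • H)))
    (NormedSpace.exp (s • (Complex.I • H))) hE
  rw [show (fun u : ℝ => Matrix.trace (stateT H ω u * mlog ω))
      = fun u => Matrix.trace (NormedSpace.exp (u • ((-Complex.I) • H)) * ω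
        * NormedSpace.exp (u • (Complex.I • H)) * mlog ω)
    from funext fun u => by rw [stateT_exp]]
  rw [sigmaAt_exp, ← hval]
  exact h

lemma continuous_sigmaAt (H ω : Matrix (Fin n) (Fin n) ℂ) :
    Continuous fun s : ℝ => sigmaAt H ω s := by
  simp only [sigmaAt_exp]
  exact ((continuous_expc _).matrix_mul continuous_const).matrix_mul (continuous_expc _)

lemma continuous_trace_sigma (H ω : Matrix (Fin n) (Fin n) ℂ) :
    Continuous fun s : ℝ => Matrix.trace (ω * sigmaAt H ω s) :=
  (continuous_const.matrix_mul (continuous_sigmaAt H ω)).matrix_trace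

lemma stateT_zero (H ω : Matrix (Fin n) (Fin n) ℂ) : stateT H ω 0 = ω := by
  unfold stateT mexp
  norm_num [NormedSpace.exp_zero]

lemma key_lemma (H ω : Matrix (Fin n) (Fin n) ℂ) (hH : H.IsHermitian) (hω : ω.IsHermitian)
    (t : ℝ) :
    Matrix.trace (stateT H ω t * (mlog ω - mlog (stateT H ω t)))
      = - ∫ s in (0:ℝ)..t, Matrix.trace (ω * sigmaAt H ω s) := by
  have hint : IntervalIntegrable (fun s => -(Matrix.trace (ω * sigmaAt H ω s)))
      MeasureTheory.volume 0 t := ((continuous_trace_sigma H ω).neg).intervalIntegrable _ _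
  have hftc := intervalIntegral.integral_eq_sub_of_hasDerivAt
    (f := fun u => Matrix.trace (stateT H ω u * mlog ω))
    (fun s _ => hasDerivAt_main H ω s) hint
  rw [intervalIntegral.integral_neg] at hftc
  rw [Matrix.mul_sub, Matrix.trace_sub, trace_stateT_mlog H ω hH hω t, hftc]
  simp [stateT_zero]

end Deriv

set_option maxHeartbeats 1000000 in
lemma trace_intSigma (H ω : Matrix (Fin n) (Fin n) ℂ) (t : ℝ) :
    Matrix.trace (ω * intSigma H ω t) = ∫ s in (0:ℝ)..t, Matrix.trace (ω * sigmaAt H ω s) := by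
  have hc : ∀ i j : Fin n, Continuous fun s : ℝ => ω i j * sigmaAt H ω s j i := fun i j =>
    continuous_const.mul ((continuous_sigmaAt H ω).matrix_elem j i)
  have swap : ∀ i j : Fin n, ω i j * (∫ s in (0:ℝ)..t, sigmaAt H ω s j i)
      = ∫ s in (0:ℝ)..t, ω i j * sigmaAt H ω s j i := fun i j =>
    (intervalIntegral.integral_const_mul _ _).symm
  calc Matrix.trace (ω * intSigma H ω t)
      = ∑ i, ∑ j, ω i j * ∫ s in (0:ℝ)..t, sigmaAt H ω s j i := by
        simp [Matrix.trace, Matrix.mul_apply, intSigma, Matrix.diag]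
    _ = ∑ i, ∑ j, ∫ s in (0:ℝ)..t, ω i j * sigmaAt H ω s j i :=
        Finset.sum_congr rfl fun i _ => Finset.sum_congr rfl fun j _ => swap i j
    _ = ∫ s in (0:ℝ)..t, ∑ i, ∑ j, ω i j * sigmaAt H ω s j i := by
        have h1 : ∀ i : Fin n, (∫ s in (0:ℝ)..t, ∑ j, ω i j * sigmaAt H ω s j i)
            = ∑ j, ∫ s in (0:ℝ)..t, ω i j * sigmaAt H ω s j i := fun i =>
          intervalIntegral.integral_finset_sum fun j _ => (hc i j).intervalIntegrable _ _
        have h2 : (∫ s in (0:ℝ)..t, ∑ i, ∑ j, ω i j * sigmaAt H ω s j i)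
            = ∑ i, ∫ s in (0:ℝ)..t, ∑ j, ω i j * sigmaAt H ω s j i :=
          intervalIntegral.integral_finset_sum fun i _ =>
            (continuous_finset_sum _ fun j _ => hc i j).intervalIntegrable _ _
        rw [h2]
        exact Finset.sum_congr rfl fun i _ => (h1 i).symm
    _ = ∫ s in (0:ℝ)..t, Matrix.trace (ω * sigmaAt H ω s) := by
        refine intervalIntegral.integral_congr fun s _ => ?_
        simp [Matrix.trace, Matrix.mul_apply, Matrix.diag]


/-- `S(ω_t|ω) = -∫₀^t tr(ω σ_s) ds`; equivalently for `t ≠ 0`,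
`S(ω_t|ω) = -t tr(ω Σ^t)`.  Here `S(ρ|ν) = tr(ρ (log ν - log ρ))`. -/
theorem stmt1 {n : ℕ} (H ω : Matrix (Fin n) (Fin n) ℂ)
    (hH : H.IsHermitian) (hω : ω.PosDef) (htr : ω.trace = 1) :
    (∀ t : ℝ, Matrix.trace (stateT H ω t * (mlog ω - mlog (stateT H ω t)))
        = - ∫ s in (0:ℝ)..t, Matrix.trace (ω * sigmaAt H ω s)) ∧
    (∀ t : ℝ, t ≠ 0 → Matrix.trace (stateT H ω t * (mlog ω - mlog (stateT H ω t)))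
        = -(t : ℂ) * Matrix.trace (ω * meanSigma H ω t)) := by
  refine ⟨fun t => key_lemma H ω hH hω.isHermitian t, fun t ht => ?_⟩
  rw [key_lemma H ω hH hω.isHermitian t, meanSigma, Matrix.mul_smul, Matrix.trace_smul,
    smul_eq_mul, trace_intSigma]
  have htc : (t : ℂ) ≠ 0 := by exact_mod_cast ht
  field_simp
end

section
/- Assume the TRI hypothesis. Then for every t ≠ 0 one has Σ^t = -e^{itH}·V·(Σ^t)ᵀ·V*·e^{-itH}. Consequently the spectrum of the Hermitian matrix Σ^t is symmetric with respect to 0, with equal multiplicities: for every φ ∈ ℝ, dim ker(Σ^t - φ·I) = dim ker(Σ^t + φ·I). -/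
open Matrix MeasureTheory Filter Topology
open scoped ComplexOrder

section Aux

variable {n : ℕ}

lemma mexp_add_smul (H : Matrix (Fin n) (Fin n) ℂ) (a b : ℂ) :
    mexp ((a + b) • H) = mexp (a • H) * mexp (b • H) := by
  rw [mexp, mexp, mexp, add_smul]
  exact Matrix.exp_add_of_commute _ _ (((Commute.refl H).smul_left a).smul_right b)

lemma mexp_zero_smul (H : Matrix (Fin n) (Fin n) ℂ) : mexp ((0 : ℂ) • H) = 1 := by
  rw [mexp, zero_smul, NormedSpace.exp_zero]

lemma mexp_mul_neg (H : Matrix (Fin n) (Fin n) ℂ) (a : ℂ) :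
    mexp (a • H) * mexp ((-a) • H) = 1 := by
  rw [← mexp_add_smul, add_neg_cancel, mexp_zero_smul]

lemma mexp_continuous (H : Matrix (Fin n) (Fin n) ℂ) :
    Continuous fun s : ℝ => mexp ((Complex.I * s) • H) := by
  letI : SeminormedRing (Matrix (Fin n) (Fin n) ℂ) := Matrix.linftyOpSemiNormedRing
  letI : NormedRing (Matrix (Fin n) (Fin n) ℂ) := Matrix.linftyOpNormedRing
  letI : NormedAlgebra ℂ (Matrix (Fin n) (Fin n) ℂ) := Matrix.linftyOpNormedAlgebra
  letI : NormedAlgebra ℚ (Matrix (Fin n) (Fin n) ℂ) := NormedAlgebra.restrictScalars ℚ ℂ _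
  exact NormedSpace.exp_continuous.comp
    ((continuous_const.mul Complex.continuous_ofReal).smul continuous_const)

variable {V : Matrix (Fin n) (Fin n) ℂ}

/-- The time-reversal map `A ↦ V Aᴴᵀ Vᴴ` as a real star-algebra homomorphism. -/
noncomputable def thetaHom (V : Matrix (Fin n) (Fin n) ℂ) (hV : V * Vᴴ = 1) (hV' : Vᴴ * V = 1) :
    Matrix (Fin n) (Fin n) ℂ →⋆ₐ[ℝ] Matrix (Fin n) (Fin n) ℂ where
  toFun A := V * Aᴴᵀ * Vᴴ
  map_one' := by simp [hV]
  map_mul' A B := by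
    show V * (A * B)ᴴᵀ * Vᴴ = (V * Aᴴᵀ * Vᴴ) * (V * Bᴴᵀ * Vᴴ)
    rw [conjTranspose_mul, transpose_mul]
    simp only [Matrix.mul_assoc]
    rw [← Matrix.mul_assoc Vᴴ V, hV', Matrix.one_mul]
  map_zero' := by simp
  map_add' A B := by
    simp [conjTranspose_add, transpose_add, Matrix.mul_add, Matrix.add_mul]
  commutes' r := by
    simp [Algebra.algebraMap_eq_smul_one, Matrix.smul_mul, Matrix.mul_smul, hV]
  map_star' A := by
    show V * Aᴴᴴᵀ * Vᴴ = (V * Aᴴᵀ * Vᴴ)ᴴ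
    have h1 : (Aᴴᵀ)ᴴ = Aᵀ := by
      ext i j
      simp [Matrix.conjTranspose_apply, Matrix.transpose_apply]
    simp only [conjTranspose_mul, conjTranspose_conjTranspose, h1]
    simp [Matrix.mul_assoc]

lemma thetaHom_continuous (hV : V * Vᴴ = 1) (hV' : Vᴴ * V = 1) :
    Continuous (thetaHom V hV hV') := by
  exact (continuous_const.matrix_mul
    (continuous_id.matrix_conjTranspose.matrix_transpose)).matrix_mul continuous_const

lemma mlog_eq_cfc {ω : Matrix (Fin n) (Fin n) ℂ} (hω : ω.IsHermitian) :
    mlog ω = cfc Real.log ω := by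
  rw [mlog, matCFC, dif_pos hω, ← hω.cfc_eq]

lemma mlog_isHermitian {ω : Matrix (Fin n) (Fin n) ℂ} (hω : ω.IsHermitian) :
    (mlog ω).IsHermitian := by
  rw [mlog_eq_cfc hω]
  exact cfc_predicate Real.log ω

lemma mlog_theta {ω : Matrix (Fin n) (Fin n) ℂ} (hω : ω.IsHermitian)
    (hV : V * Vᴴ = 1) (hV' : Vᴴ * V = 1) (hTRIω : V * ωᵀ * Vᴴ = ω) :
    V * (mlog ω)ᵀ * Vᴴ = mlog ω := by
  have hθω : thetaHom V hV hV' ω = ω := by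
    show V * ωᴴᵀ * Vᴴ = ω
    rw [hω.eq, hTRIω]
  have hsa : IsSelfAdjoint ω := hω
  have hmap := StarAlgHomClass.map_cfc (thetaHom V hV hV') Real.log ω
    ((Matrix.finite_real_spectrum (A := ω)).continuousOn _)
    (thetaHom_continuous hV hV') hsa (by rw [hθω]; exact hsa)
  rw [hθω] at hmap
  have hher : (cfc Real.log ω).IsHermitian := cfc_predicate Real.log ω
  rw [mlog_eq_cfc hω]
  calc V * (cfc Real.log ω)ᵀ * Vᴴ = V * (cfc Real.log ω)ᴴᵀ * Vᴴ := by rw [hher.eq]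
    _ = cfc Real.log ω := hmap

lemma conj_mul_conj (hV' : Vᴴ * V = 1) (A B : Matrix (Fin n) (Fin n) ℂ) :
    V * (A * B) * Vᴴ = (V * A * Vᴴ) * (V * B * Vᴴ) := by
  simp only [Matrix.mul_assoc]
  rw [← Matrix.mul_assoc Vᴴ V, hV', Matrix.one_mul]

end Aux

section Aux2

variable {n : ℕ} {H ω V : Matrix (Fin n) (Fin n) ℂ}

lemma conj_mul3 (hV' : Vᴴ * V = 1) (A B C : Matrix (Fin n) (Fin n) ℂ) :
    V * (A * (B * C)) * Vᴴ = (V * A * Vᴴ) * ((V * B * Vᴴ) * (V * C * Vᴴ)) := by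
  rw [conj_mul_conj hV', conj_mul_conj hV']

lemma mexp_conj_theta (hV : V * Vᴴ = 1) (hV' : Vᴴ * V = 1) (hTRIH : V * Hᵀ * Vᴴ = H) (a : ℂ) :
    V * mexp (a • Hᵀ) * Vᴴ = mexp (a • H) := by
  have hu : IsUnit V := ⟨⟨V, Vᴴ, hV, hV'⟩, rfl⟩
  have hVinv : V⁻¹ = Vᴴ := Matrix.inv_eq_right_inv hV
  rw [mexp, mexp, ← hVinv, ← Matrix.exp_conj V _ hu]
  congr 1
  rw [hVinv, mul_smul_comm, smul_mul_assoc, hTRIH]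

lemma mexp_smul_transpose (H : Matrix (Fin n) (Fin n) ℂ) (a : ℂ) :
    (mexp (a • H))ᵀ = mexp (a • Hᵀ) := by
  rw [mexp, mexp, ← Matrix.exp_transpose, transpose_smul]

lemma entropyProd_theta (hV : V * Vᴴ = 1) (hV' : Vᴴ * V = 1) (hTRIH : V * Hᵀ * Vᴴ = H)
    (hω : ω.IsHermitian) (hTRIω : V * ωᵀ * Vᴴ = ω) :
    V * (entropyProd H ω)ᵀ * Vᴴ = -(entropyProd H ω) := by
  have hL := mlog_theta hω hV hV' hTRIω
  rw [entropyProd, transpose_smul, transpose_sub, transpose_mul, transpose_mul,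
    mul_smul_comm, smul_mul_assoc, Matrix.mul_sub, Matrix.sub_mul,
    conj_mul_conj hV', conj_mul_conj hV', hL, hTRIH, ← smul_neg, neg_sub]

lemma sigmaAt_theta (hV : V * Vᴴ = 1) (hV' : Vᴴ * V = 1) (hTRIH : V * Hᵀ * Vᴴ = H)
    (hω : ω.IsHermitian) (hTRIω : V * ωᵀ * Vᴴ = ω) (s : ℝ) :
    V * (sigmaAt H ω s)ᵀ * Vᴴ = -(sigmaAt H ω (-s)) := by
  rw [sigmaAt, heisenberg, transpose_mul, transpose_mul, mexp_smul_transpose,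
    mexp_smul_transpose, conj_mul3 hV', mexp_conj_theta hV hV' hTRIH,
    mexp_conj_theta hV hV' hTRIH, entropyProd_theta hV hV' hTRIH hω hTRIω]
  simp [sigmaAt, heisenberg, Complex.ofReal_neg, mul_neg, neg_mul, neg_neg, Matrix.mul_assoc]

lemma sigmaAt_continuous : Continuous fun s : ℝ => sigmaAt H ω s := by
  have h1 := mexp_continuous H
  have h2 : Continuous fun s : ℝ => mexp ((-(Complex.I * s)) • H) := by
    have := h1.comp continuous_neg
    convert this using 2 with s
    simp [Complex.ofReal_neg, mul_neg]
  exact (h1.matrix_mul continuous_const).matrix_mul h2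

lemma conj_intSigma (P Q : Matrix (Fin n) (Fin n) ℂ) (t : ℝ) :
    P * (intSigma H ω t)ᵀ * Q
      = Matrix.of fun i j => ∫ s in (0:ℝ)..t, (P * (sigmaAt H ω s)ᵀ * Q) i j := by
  have hc : ∀ k l : Fin n, Continuous fun s : ℝ => sigmaAt H ω s k l := fun k l =>
    sigmaAt_continuous.matrix_elem k l
  ext i j
  simp only [Matrix.mul_apply, Matrix.transpose_apply, intSigma, Matrix.of_apply]
  rw [intervalIntegral.integral_finset_sum
    (f := fun l (s : ℝ) => (∑ k, P i k * sigmaAt H ω s l k) * Q l j) (fun l _ =>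
    (((continuous_finset_sum _ fun k _ => continuous_const.mul (hc l k)).mul
      continuous_const).intervalIntegrable _ _))]
  refine Finset.sum_congr rfl fun l _ => ?_
  rw [intervalIntegral.integral_mul_const, intervalIntegral.integral_finset_sum
    (f := fun k (s : ℝ) => P i k * sigmaAt H ω s l k) (fun k _ =>
    ((continuous_const.mul (hc l k)).intervalIntegrable _ _))]
  congr 1
  exact Finset.sum_congr rfl fun k _ => (intervalIntegral.integral_const_mul _ _).symm

lemma intSigma_theta (hV : V * Vᴴ = 1) (hV' : Vᴴ * V = 1) (hTRIH : V * Hᵀ * Vᴴ = H)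
    (hω : ω.IsHermitian) (hTRIω : V * ωᵀ * Vᴴ = ω) (t : ℝ) :
    mexp ((Complex.I * t) • H) * V * (intSigma H ω t)ᵀ * Vᴴ * mexp ((-(Complex.I * t)) • H)
      = -(intSigma H ω t) := by
  set P := mexp ((Complex.I * t) • H) * V with hP
  set Q := Vᴴ * mexp ((-(Complex.I * t)) • H) with hQ
  have hassoc : mexp ((Complex.I * t) • H) * V * (intSigma H ω t)ᵀ * Vᴴ *
      mexp ((-(Complex.I * t)) • H) = P * (intSigma H ω t)ᵀ * Q := by
    simp only [hP, hQ, Matrix.mul_assoc]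
  have hpt : ∀ s : ℝ, P * (sigmaAt H ω s)ᵀ * Q = -(sigmaAt H ω (t - s)) := by
    intro s
    have h1 : P * (sigmaAt H ω s)ᵀ * Q
        = mexp ((Complex.I * t) • H) * (V * (sigmaAt H ω s)ᵀ * Vᴴ) *
          mexp ((-(Complex.I * t)) • H) := by
      simp only [hP, hQ, Matrix.mul_assoc]
    rw [h1, sigmaAt_theta hV hV' hTRIH hω hTRIω, mul_neg, neg_mul]
    congr 1
    rw [sigmaAt, sigmaAt, heisenberg, heisenberg]
    have e1 : Complex.I * ((t : ℂ)) + Complex.I * ((-s : ℝ) : ℂ)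
        = Complex.I * (((t - s : ℝ)) : ℂ) := by push_cast; ring
    have e2 : (-(Complex.I * ((-s : ℝ) : ℂ))) + (-(Complex.I * (t : ℂ)))
        = -(Complex.I * (((t - s : ℝ)) : ℂ)) := by push_cast; ring
    calc mexp ((Complex.I * (t:ℂ)) • H) *
          (mexp ((Complex.I * ((-s:ℝ):ℂ)) • H) * entropyProd H ω *
            mexp ((-(Complex.I * ((-s:ℝ):ℂ))) • H)) * mexp ((-(Complex.I * (t:ℂ))) • H)
        = (mexp ((Complex.I * (t:ℂ)) • H) * mexp ((Complex.I * ((-s:ℝ):ℂ)) • H)) *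
            entropyProd H ω *
            (mexp ((-(Complex.I * ((-s:ℝ):ℂ))) • H) * mexp ((-(Complex.I * (t:ℂ))) • H)) := by
          simp only [Matrix.mul_assoc]
      _ = mexp ((Complex.I * (((t - s : ℝ)) : ℂ)) • H) * entropyProd H ω *
            mexp ((-(Complex.I * (((t - s : ℝ)) : ℂ))) • H) := by
          rw [← mexp_add_smul, ← mexp_add_smul, e1, e2]
  rw [hassoc, conj_intSigma]
  ext i j
  simp only [Matrix.of_apply, Matrix.neg_apply, intSigma]
  calc (∫ s in (0:ℝ)..t, (P * (sigmaAt H ω s)ᵀ * Q) i j)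
      = ∫ s in (0:ℝ)..t, -(sigmaAt H ω (t - s) i j) := by
        refine intervalIntegral.integral_congr fun s _ => ?_
        rw [hpt s, Matrix.neg_apply]
    _ = -∫ s in (0:ℝ)..t, sigmaAt H ω (t - s) i j := intervalIntegral.integral_neg
    _ = -∫ s in (0:ℝ)..t, sigmaAt H ω s i j := by
        rw [intervalIntegral.integral_comp_sub_left (fun u => sigmaAt H ω u i j) t]
        norm_num

end Aux2

/-- under time-reversal invariance, `Σ^t = -e^{itH} V (Σ^t)ᵀ V* e^{-itH}` for
`t ≠ 0`, and the spectrum of `Σ^t` is symmetric about `0` with equal multiplicities. -/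
theorem stmt3 {n : ℕ} (H ω V : Matrix (Fin n) (Fin n) ℂ)
    (hH : H.IsHermitian) (hω : ω.PosDef) (htr : ω.trace = 1)
    (hV : V * Vᴴ = 1) (hV' : Vᴴ * V = 1)
    (hTRIH : V * Hᵀ * Vᴴ = H) (hTRIω : V * ωᵀ * Vᴴ = ω)
    (t : ℝ) (ht : t ≠ 0) :
    meanSigma H ω t
      = -(mexp ((Complex.I * t) • H) * V * (meanSigma H ω t)ᵀ * Vᴴ *
          mexp ((-(Complex.I * t)) • H)) ∧
    ∀ φ : ℝ,
      Module.finrank ℂ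
          (LinearMap.ker (Matrix.mulVecLin (meanSigma H ω t - (φ : ℂ) • 1)))
        = Module.finrank ℂ
          (LinearMap.ker (Matrix.mulVecLin (meanSigma H ω t + (φ : ℂ) • 1))) := by
  have key := intSigma_theta hV hV' hTRIH hω.1 hTRIω t
  have h1 : meanSigma H ω t
      = -(mexp ((Complex.I * t) • H) * V * (meanSigma H ω t)ᵀ * Vᴴ *
          mexp ((-(Complex.I * t)) • H)) := by
    rw [meanSigma, transpose_smul]
    rw [show mexp ((Complex.I * t) • H) * V * (((t:ℂ)⁻¹) • (intSigma H ω t)ᵀ) * Vᴴ *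
        mexp ((-(Complex.I * t)) • H)
        = ((t:ℂ)⁻¹) • (mexp ((Complex.I * t) • H) * V * (intSigma H ω t)ᵀ * Vᴴ *
          mexp ((-(Complex.I * t)) • H)) by
      simp only [mul_smul_comm, smul_mul_assoc]]
    rw [key, smul_neg, neg_neg]
  refine ⟨h1, fun φ => ?_⟩
  set M := meanSigma H ω t with hMdef
  set P := mexp ((Complex.I * t) • H) * V with hP
  set Q := Vᴴ * mexp ((-(Complex.I * t)) • H) with hQ
  have hMQ : M = -(P * Mᵀ * Q) := by
    conv_lhs => rw [h1]
    simp only [hP, hQ, Matrix.mul_assoc]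
  have hPQ : P * Q = 1 := by
    rw [hP, hQ]
    calc mexp ((Complex.I * t) • H) * V * (Vᴴ * mexp ((-(Complex.I * t)) • H))
        = mexp ((Complex.I * t) • H) * (V * Vᴴ) * mexp ((-(Complex.I * t)) • H) := by
          simp only [Matrix.mul_assoc]
      _ = 1 := by rw [hV, Matrix.mul_one, mexp_mul_neg]
  have hdetP : IsUnit P.det := by
    refine IsUnit.of_mul_eq_one Q.det ?_
    rw [← Matrix.det_mul, hPQ, Matrix.det_one]
  have hdetQ : IsUnit Q.det := by
    refine IsUnit.of_mul_eq_one P.det ?_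
    rw [mul_comm, ← Matrix.det_mul, hPQ, Matrix.det_one]
  have hdetnP : IsUnit (-P).det := by
    rw [Matrix.det_neg]
    exact (IsUnit.pow _ (isUnit_one.neg)).mul hdetP
  have hsm : P * ((φ:ℂ) • 1) * Q = (φ:ℂ) • 1 := by
    rw [mul_smul_comm, Matrix.mul_one, smul_mul_assoc, hPQ]
  have hrep : M - (φ:ℂ) • 1 = (-P) * (M + (φ:ℂ) • 1)ᵀ * Q := by
    rw [transpose_add, transpose_smul, transpose_one, neg_mul, neg_mul,
      Matrix.mul_add, Matrix.add_mul, hsm, neg_add, ← hMQ, sub_eq_add_neg]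
  have hr : (M - (φ:ℂ) • 1).rank = (M + (φ:ℂ) • 1).rank := by
    rw [hrep, Matrix.rank_mul_eq_left_of_isUnit_det Q _ hdetQ,
      Matrix.rank_mul_eq_right_of_isUnit_det (-P) _ hdetnP, Matrix.rank_transpose]
  have key2 : ∀ B : Matrix (Fin n) (Fin n) ℂ,
      B.rank + Module.finrank ℂ (LinearMap.ker (Matrix.mulVecLin B)) = n := by
    intro B
    have h := LinearMap.finrank_range_add_finrank_ker B.mulVecLin
    rwa [Module.finrank_fin_fun] at h
  have e1 := key2 (M - (φ:ℂ) • 1)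
  have e2 := key2 (M + (φ:ℂ) • 1)
  omega
end

section
/- Finite-time second law of thermodynamics: for every t ∈ ℝ, ∫₀^t tr(ω·σ_s) ds ≥ 0 (the signed integral from 0 to t); equivalently, for t ≠ 0, t·tr(ω·Σ^t) ≥ 0. -/
open Matrix MeasureTheory Filter Topology
open scoped ComplexOrder

/- ### Auxiliary lemmas -/

lemma pt_ineq {x y : ℝ} (hx : 0 < x) (hy : 0 < y) : x - y ≤ x * Real.log x - x * Real.log y := by
  have h := Real.log_le_sub_one_of_pos (div_pos hy hx)
  rw [Real.log_div hy.ne' hx.ne'] at h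
  have h2 := mul_le_mul_of_nonneg_left h hx.le
  have hx' : x * (y / x - 1) = y - x := by field_simp
  nlinarith

lemma trace_diag_unitary {n : ℕ} (d e : Fin n → ℝ) (M : Matrix (Fin n) (Fin n) ℂ) :
    (Matrix.trace (Matrix.diagonal (fun i => (d i : ℂ)) * M *
      Matrix.diagonal (fun j => (e j : ℂ)) * Mᴴ)).re =
    ∑ i, ∑ j, d i * e j * Complex.normSq (M i j) := by
  have key : ∀ i j, (Matrix.diagonal (fun i => (d i : ℂ)) * M *
      Matrix.diagonal (fun j => (e j : ℂ))) i j = (d i : ℂ) * M i j * (e j : ℂ) := by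
    intro i j
    rw [Matrix.mul_diagonal, Matrix.diagonal_mul]
  simp only [Matrix.trace, Matrix.diag_apply, Matrix.mul_apply, Matrix.conjTranspose_apply, key]
  rw [Complex.re_sum]
  refine Finset.sum_congr rfl fun i _ => ?_
  rw [Complex.re_sum]
  refine Finset.sum_congr rfl fun j _ => ?_
  have : ((d i : ℂ) * M i j * (e j : ℂ) * star (M i j)) =
      ((d i * e j * Complex.normSq (M i j) : ℝ) : ℂ) := by
    push_cast
    rw [← Complex.mul_conj]
    ring_nf
    rfl
  rw [this, Complex.ofReal_re]

lemma klein {n : ℕ} (ω : Matrix (Fin n) (Fin n) ℂ) (hω : ω.PosDef)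
    (U : Matrix (Fin n) (Fin n) ℂ) (hU1 : U * Uᴴ = 1) (hU2 : Uᴴ * U = 1) :
    (Matrix.trace (ω * U * mlog ω * Uᴴ)).re ≤ (Matrix.trace (ω * mlog ω)).re := by
  have hH : ω.IsHermitian := hω.1
  set V : Matrix (Fin n) (Fin n) ℂ := (hH.eigenvectorUnitary : Matrix (Fin n) (Fin n) ℂ) with hVdef
  set a : Fin n → ℝ := hH.eigenvalues with hadef
  have ha : ∀ i, 0 < a i := hω.eigenvalues_pos
  have hV1 : V * Vᴴ = 1 := by
    simpa [hVdef, Matrix.star_eq_conjTranspose] using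
      (Matrix.mem_unitaryGroup_iff.mp hH.eigenvectorUnitary.2)
  have hV2 : Vᴴ * V = 1 := by
    simpa [hVdef, Matrix.star_eq_conjTranspose] using
      (Matrix.mem_unitaryGroup_iff'.mp hH.eigenvectorUnitary.2)
  set D : Matrix (Fin n) (Fin n) ℂ := Matrix.diagonal (fun i => (a i : ℂ)) with hD
  set D' : Matrix (Fin n) (Fin n) ℂ := Matrix.diagonal (fun i => (Real.log (a i) : ℂ)) with hD'
  have spec : ω = V * D * Vᴴ := by
    have := hH.spectral_theorem
    rw [this]
    rfl
  have hlog : mlog ω = V * D' * Vᴴ := by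
    rw [mlog, matCFC, dif_pos hH]
    rfl
  set M : Matrix (Fin n) (Fin n) ℂ := Vᴴ * U * V with hM
  have cancV : ∀ X : Matrix (Fin n) (Fin n) ℂ, V * (Vᴴ * X) = X := fun X => by
    rw [← Matrix.mul_assoc, hV1, Matrix.one_mul]
  have cancV' : ∀ X : Matrix (Fin n) (Fin n) ℂ, Vᴴ * (V * X) = X := fun X => by
    rw [← Matrix.mul_assoc, hV2, Matrix.one_mul]
  have cancU : ∀ X : Matrix (Fin n) (Fin n) ℂ, U * (Uᴴ * X) = X := fun X => by
    rw [← Matrix.mul_assoc, hU1, Matrix.one_mul]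
  have cancU' : ∀ X : Matrix (Fin n) (Fin n) ℂ, Uᴴ * (U * X) = X := fun X => by
    rw [← Matrix.mul_assoc, hU2, Matrix.one_mul]
  -- unitarity of M
  have hMM : M * Mᴴ = 1 := by
    simp only [hM, Matrix.conjTranspose_mul, Matrix.conjTranspose_conjTranspose,
      Matrix.mul_assoc, cancV, cancV', cancU, cancU']
    exact hV2
  have hM'M : Mᴴ * M = 1 := by
    simp only [hM, Matrix.conjTranspose_mul, Matrix.conjTranspose_conjTranspose,
      Matrix.mul_assoc, cancV, cancV', cancU, cancU']
    exact hV2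
  -- row and column sums of p
  set p : Fin n → Fin n → ℝ := fun i j => Complex.normSq (M i j) with hp
  have hrow : ∀ i, ∑ j, p i j = 1 := by
    intro i
    have h1 : (M * Mᴴ) i i = 1 := by rw [hMM]; simp
    rw [Matrix.mul_apply] at h1
    simp only [Matrix.conjTranspose_apply] at h1
    have : ∑ j, ((p i j : ℝ) : ℂ) = 1 := by
      rw [← h1]
      exact Finset.sum_congr rfl fun j _ => by
        rw [hp]; rw [← Complex.mul_conj]; rfl
    exact_mod_cast this
  have hcol : ∀ j, ∑ i, p i j = 1 := by
    intro j
    have h1 : (Mᴴ * M) j j = 1 := by rw [hM'M]; simp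
    rw [Matrix.mul_apply] at h1
    simp only [Matrix.conjTranspose_apply] at h1
    have : ∑ i, ((p i j : ℝ) : ℂ) = 1 := by
      rw [← h1]
      exact Finset.sum_congr rfl fun i _ => by
        rw [hp]; rw [← Complex.mul_conj, mul_comm]; rfl
    exact_mod_cast this
  -- rewrite both traces
  have hmat : ω * U * mlog ω * Uᴴ = V * (D * M * D' * Mᴴ) * Vᴴ := by
    rw [hlog, spec, hM]
    simp only [Matrix.conjTranspose_mul, Matrix.conjTranspose_conjTranspose, Matrix.mul_assoc,
      cancV, cancV', hV1, Matrix.mul_one]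
  have hLHS : (Matrix.trace (ω * U * mlog ω * Uᴴ)).re = ∑ i, ∑ j, a i * Real.log (a j) * p i j := by
    rw [hmat, Matrix.trace_mul_cycle, ← Matrix.mul_assoc, hV2, Matrix.one_mul]
    exact trace_diag_unitary a (fun j => Real.log (a j)) M
  have hmat2 : ω * mlog ω = V * (D * D') * Vᴴ := by
    rw [hlog, spec]
    simp only [Matrix.mul_assoc, cancV, cancV']
  have hRHS : (Matrix.trace (ω * mlog ω)).re = ∑ i, a i * Real.log (a i) := by
    rw [hmat2, Matrix.trace_mul_cycle, ← Matrix.mul_assoc, hV2, Matrix.one_mul, hD, hD',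
      Matrix.diagonal_mul_diagonal, Matrix.trace_diagonal]
    rw [Complex.re_sum]
    simp only [← Complex.ofReal_mul, Complex.ofReal_re]
  rw [hLHS, hRHS]
  -- the entropy inequality
  have hzero : ∑ i, ∑ j, (a i - a j) * p i j = 0 := by
    have h1 : ∑ i, ∑ j, a i * p i j = ∑ i, a i := by
      refine Finset.sum_congr rfl fun i _ => ?_
      rw [← Finset.mul_sum, hrow, mul_one]
    have h2 : ∑ i, ∑ j, a j * p i j = ∑ j, a j := by
      rw [Finset.sum_comm]
      refine Finset.sum_congr rfl fun j _ => ?_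
      rw [← Finset.mul_sum, hcol, mul_one]
    simp only [sub_mul, Finset.sum_sub_distrib]
    rw [h1, h2, sub_self]
  have key : ∀ i j, a i * Real.log (a j) * p i j ≤
      a i * Real.log (a i) * p i j - (a i - a j) * p i j := by
    intro i j
    have hpnn : 0 ≤ p i j := Complex.normSq_nonneg _
    have hpt := pt_ineq (ha i) (ha j)
    nlinarith
  calc ∑ i, ∑ j, a i * Real.log (a j) * p i j
      ≤ ∑ i, ∑ j, (a i * Real.log (a i) * p i j - (a i - a j) * p i j) := by
        refine Finset.sum_le_sum fun i _ => Finset.sum_le_sum fun j _ => key i j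
    _ = ∑ i, ∑ j, a i * Real.log (a i) * p i j - ∑ i, ∑ j, (a i - a j) * p i j := by
        simp [Finset.sum_sub_distrib]
    _ = ∑ i, a i * Real.log (a i) := by
        rw [hzero, sub_zero]
        refine Finset.sum_congr rfl fun i _ => ?_
        rw [← Finset.mul_sum, hrow i, mul_one]

section Analysis
variable {n : ℕ}
attribute [local instance] Matrix.linftyOpNormedAddCommGroup Matrix.linftyOpNormedSpace
  Matrix.linftyOpNormedRing Matrix.linftyOpNormedAlgebra

namespace EP
variable (H ω : Matrix (Fin n) (Fin n) ℂ)

noncomputable def Uu (s : ℝ) : Matrix (Fin n) (Fin n) ℂ :=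
  NormedSpace.exp (s • (Complex.I • H))

noncomputable def traceCLM : Matrix (Fin n) (Fin n) ℂ →L[ℂ] ℂ :=
  LinearMap.toContinuousLinearMap
    ((Matrix.traceLinearMap (Fin n) ℂ ℂ).comp (LinearMap.mulLeft ℂ ω))

lemma traceCLM_apply (X : Matrix (Fin n) (Fin n) ℂ) :
    traceCLM ω X = Matrix.trace (ω * X) := rfl

lemma expU (s : ℝ) : mexp ((Complex.I * s) • H) = Uu H s := by
  rw [mexp, Uu]
  congr 1
  rw [← smul_assoc]
  norm_num [Complex.real_smul, mul_comm]

lemma expU' (s : ℝ) : mexp ((-(Complex.I * s)) • H) = Uu H (-s) := by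
  rw [mexp, Uu]
  congr 1
  rw [← smul_assoc]
  norm_num [Complex.real_smul, mul_comm]

lemma Uu_zero : Uu H 0 = 1 := by
  rw [Uu, zero_smul, NormedSpace.exp_zero]

lemma Uu_mul_neg (t : ℝ) : Uu H t * Uu H (-t) = 1 := by
  have hc : Commute ((t : ℝ) • (Complex.I • H)) ((-t : ℝ) • (Complex.I • H)) :=
    ((Commute.refl _).smul_left t).smul_right (-t)
  rw [Uu, Uu]
  have h := Matrix.exp_add_of_commute _ _ hc
  rw [← add_smul, add_neg_cancel, zero_smul, NormedSpace.exp_zero] at h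
  exact h.symm

lemma Uu_star (hH : H.IsHermitian) (t : ℝ) : (Uu H t)ᴴ = Uu H (-t) := by
  have e1 : ∀ u : ℝ, (u : ℝ) • (Complex.I • H) = ((u : ℂ) * Complex.I) • H := by
    intro u
    rw [← smul_assoc]
    norm_num [Complex.real_smul]
  rw [Uu, Uu, ← Matrix.exp_conjTranspose]
  congr 1
  rw [e1, e1, Matrix.conjTranspose_smul, hH.eq]
  congr 1
  simp [Complex.ext_iff]

lemma Uu_unit1 (hH : H.IsHermitian) (t : ℝ) : Uu H t * (Uu H t)ᴴ = 1 := by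
  rw [Uu_star H hH t]; exact Uu_mul_neg H t

lemma Uu_unit2 (hH : H.IsHermitian) (t : ℝ) : (Uu H t)ᴴ * Uu H t = 1 := by
  rw [Uu_star H hH t]
  have := Uu_mul_neg H (-t)
  simpa [neg_neg] using this

lemma hasDerivAt_Uu (s : ℝ) :
    HasDerivAt (Uu H) (Uu H s * (Complex.I • H)) s :=
  hasDerivAt_exp_smul_const _ s

lemma hasDerivAt_Uu_neg (s : ℝ) :
    HasDerivAt (fun u : ℝ => Uu H (-u)) ((-1 : ℝ) • ((Complex.I • H) * Uu H (-s))) s := by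
  exact (hasDerivAt_exp_smul_const' (Complex.I • H) (-s)).scomp s (hasDerivAt_neg s)

lemma continuous_Uu : Continuous (Uu H) :=
  continuous_iff_continuousAt.2 fun s => (hasDerivAt_Uu H s).continuousAt

noncomputable def Gp (s : ℝ) : Matrix (Fin n) (Fin n) ℂ :=
  Uu H s * mlog ω * Uu H (-s)

lemma sigmaAt_eq (s : ℝ) :
    sigmaAt H ω s = (-Complex.I) • (Uu H s * (H * mlog ω - mlog ω * H) * Uu H (-s)) := by
  rw [sigmaAt, heisenberg, entropyProd, expU, expU']
  simp only [smul_mul_assoc, mul_smul_comm]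

lemma continuous_sigma : Continuous fun s => sigmaAt H ω s := by
  simp only [sigmaAt_eq]
  exact (((continuous_Uu H).mul continuous_const).mul
    ((continuous_Uu H).comp continuous_neg)).const_smul (-Complex.I)

lemma hasDerivAt_G (s : ℝ) :
    HasDerivAt (Gp H ω)
      (Uu H s * (Complex.I • H) * mlog ω * Uu H (-s) +
        Uu H s * mlog ω * ((-1 : ℝ) • ((Complex.I • H) * Uu H (-s)))) s :=
  (((hasDerivAt_Uu H s).mul_const (mlog ω)).mul (hasDerivAt_Uu_neg H s))

lemma deriv_eq_sigma (s : ℝ) :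
    Uu H s * (Complex.I • H) * mlog ω * Uu H (-s) +
      Uu H s * mlog ω * ((-1 : ℝ) • ((Complex.I • H) * Uu H (-s))) =
    Complex.I • (Uu H s * (H * mlog ω - mlog ω * H) * Uu H (-s)) := by
  simp only [smul_mul_assoc, mul_smul_comm, mul_neg, mul_sub, sub_mul, smul_sub, neg_one_smul,
    Matrix.mul_assoc, ← sub_eq_add_neg]

lemma hasDerivAt_F (s : ℝ) :
    HasDerivAt (fun u => Matrix.trace (ω * Gp H ω u))
      (Complex.I * Matrix.trace (ω * (Uu H s * (H * mlog ω - mlog ω * H) * Uu H (-s)))) s := by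
  have h := ((traceCLM ω).restrictScalars ℝ).hasFDerivAt.comp_hasDerivAt s
    (hasDerivAt_G H ω s)
  simp only [ContinuousLinearMap.coe_restrictScalars', Function.comp] at h
  rw [deriv_eq_sigma] at h
  have h' : HasDerivAt (fun u => traceCLM ω (Gp H ω u))
      (traceCLM ω (Complex.I • (Uu H s * (H * mlog ω - mlog ω * H) * Uu H (-s)))) s := h
  simpa only [traceCLM_apply, mul_smul_comm, Matrix.trace_smul, smul_eq_mul] using h'

lemma trace_sigma_eq (s : ℝ) :
    Matrix.trace (ω * sigmaAt H ω s) =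
      -(Complex.I * Matrix.trace (ω * (Uu H s * (H * mlog ω - mlog ω * H) * Uu H (-s)))) := by
  rw [sigmaAt_eq]
  simp only [mul_smul_comm, Matrix.trace_smul, smul_eq_mul, neg_mul, neg_neg]

lemma hasDerivAt_negF (s : ℝ) :
    HasDerivAt (fun u => -Matrix.trace (ω * Gp H ω u))
      (Matrix.trace (ω * sigmaAt H ω s)) s := by
  rw [trace_sigma_eq]
  exact (hasDerivAt_F H ω s).neg

lemma continuous_trace_sigma : Continuous fun s => Matrix.trace (ω * sigmaAt H ω s) :=
  (traceCLM ω).continuous.comp (continuous_sigma H ω)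

lemma integral_trace_sigma_complex (t : ℝ) :
    ∫ s in (0:ℝ)..t, Matrix.trace (ω * sigmaAt H ω s) =
      Matrix.trace (ω * mlog ω) - Matrix.trace (ω * Gp H ω t) := by
  rw [intervalIntegral.integral_eq_sub_of_hasDerivAt
    (fun s _ => hasDerivAt_negF H ω s)
    ((continuous_trace_sigma H ω).intervalIntegrable 0 t)]
  simp only [Gp, neg_zero, Uu_zero, Matrix.one_mul, Matrix.mul_one]
  ring

lemma integral_trace_sigma_re (t : ℝ) :
    ∫ s in (0:ℝ)..t, (Matrix.trace (ω * sigmaAt H ω s)).re =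
      (Matrix.trace (ω * mlog ω)).re - (Matrix.trace (ω * Gp H ω t)).re := by
  have hd : ∀ s ∈ Set.uIcc (0:ℝ) t,
      HasDerivAt (fun u => (-Matrix.trace (ω * Gp H ω u)).re)
        ((Matrix.trace (ω * sigmaAt H ω s)).re) s := fun s _ =>
    Complex.reCLM.hasFDerivAt.comp_hasDerivAt s (hasDerivAt_negF H ω s)
  have hcont : Continuous fun s => (Matrix.trace (ω * sigmaAt H ω s)).re :=
    Complex.continuous_re.comp (continuous_trace_sigma H ω)
  rw [intervalIntegral.integral_eq_sub_of_hasDerivAt hd (hcont.intervalIntegrable 0 t)]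
  simp only [Gp, neg_zero, Uu_zero, Matrix.one_mul, Matrix.mul_one, Complex.neg_re]
  ring

lemma trace_integral_swap (h : ℝ → Matrix (Fin n) (Fin n) ℂ) (hcont : Continuous h) (t : ℝ) :
    Matrix.trace (ω * Matrix.of fun i j => ∫ s in (0:ℝ)..t, h s i j) =
      ∫ s in (0:ℝ)..t, Matrix.trace (ω * h s) := by
  have hce : ∀ (k i : Fin n), Continuous fun s => h s k i := by
    intro k i
    let E : Matrix (Fin n) (Fin n) ℂ →ₗ[ℂ] ℂ :=
      { toFun := fun A => A k i, map_add' := fun _ _ => rfl, map_smul' := fun _ _ => rfl }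
    exact (LinearMap.toContinuousLinearMap E).continuous.comp hcont
  have hint : ∀ (k i : Fin n), IntervalIntegrable (fun s => h s k i) volume 0 t :=
    fun k i => (hce k i).intervalIntegrable 0 t
  have hcs : ∀ i : Fin n, Continuous fun s => ∑ k, ω i k * h s k i := fun i =>
    continuous_finset_sum _ fun k _ => (continuous_const.mul (hce k i))
  have expand : ∀ X : Matrix (Fin n) (Fin n) ℂ,
      Matrix.trace (ω * X) = ∑ i, ∑ k, ω i k * X k i := by
    intro X
    simp [Matrix.trace, Matrix.mul_apply, Matrix.diag]
  rw [expand]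
  have step1 : ∀ i k : Fin n, ω i k * (Matrix.of fun i j => ∫ s in (0:ℝ)..t, h s i j) k i =
      ∫ s in (0:ℝ)..t, ω i k * h s k i := by
    intro i k
    have h2 : (Matrix.of fun i j => ∫ s in (0:ℝ)..t, h s i j) k i =
        ∫ s in (0:ℝ)..t, h s k i := rfl
    rw [h2, ← smul_eq_mul, ← intervalIntegral.integral_smul]
    simp [smul_eq_mul]
  calc ∑ i, ∑ k, ω i k * (Matrix.of fun i j => ∫ s in (0:ℝ)..t, h s i j) k i
      = ∑ i, ∑ k, ∫ s in (0:ℝ)..t, ω i k * h s k i := by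
        exact Finset.sum_congr rfl fun i _ => Finset.sum_congr rfl fun k _ => step1 i k
    _ = ∑ i, ∫ s in (0:ℝ)..t, ∑ k, ω i k * h s k i := by
        exact Finset.sum_congr rfl fun i _ =>
          (intervalIntegral.integral_finset_sum
            (fun k _ => (hint k i).const_mul (ω i k))).symm
    _ = ∫ s in (0:ℝ)..t, ∑ i, ∑ k, ω i k * h s k i := by
        exact (intervalIntegral.integral_finset_sum
          (f := fun i s => ∑ k, ω i k * h s k i)
          (fun i _ => (hcs i).intervalIntegrable 0 t)).symm
    _ = ∫ s in (0:ℝ)..t, Matrix.trace (ω * h s) := by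
        exact intervalIntegral.integral_congr fun s _ => (expand _).symm

lemma trace_intSigma (t : ℝ) :
    Matrix.trace (ω * intSigma H ω t) =
      ∫ s in (0:ℝ)..t, Matrix.trace (ω * sigmaAt H ω s) :=
  trace_integral_swap ω _ (continuous_sigma H ω) t

end EP
end Analysis

/-- finite-time second law: `∫₀^t tr(ω σ_s) ds ≥ 0` for all `t`; equivalently
`t · tr(ω Σ^t) ≥ 0` for `t ≠ 0`. -/
theorem stmt4 {n : ℕ} (H ω : Matrix (Fin n) (Fin n) ℂ)
    (hH : H.IsHermitian) (hω : ω.PosDef) (htr : ω.trace = 1) :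
    (∀ t : ℝ, 0 ≤ ∫ s in (0:ℝ)..t, (Matrix.trace (ω * sigmaAt H ω s)).re) ∧
    (∀ t : ℝ, t ≠ 0 → 0 ≤ t * (Matrix.trace (ω * meanSigma H ω t)).re) := by
  have hk : ∀ t : ℝ, (Matrix.trace (ω * EP.Gp H ω t)).re ≤ (Matrix.trace (ω * mlog ω)).re := by
    intro t
    have e : ω * EP.Gp H ω t = ω * EP.Uu H t * mlog ω * (EP.Uu H t)ᴴ := by
      rw [EP.Gp, EP.Uu_star H hH t]
      simp [Matrix.mul_assoc]
    rw [e]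
    exact klein ω hω (EP.Uu H t) (EP.Uu_unit1 H hH t) (EP.Uu_unit2 H hH t)
  constructor
  · intro t
    rw [EP.integral_trace_sigma_re H ω t]
    have := hk t
    linarith
  · intro t ht
    have hmean : Matrix.trace (ω * meanSigma H ω t)
        = ((t : ℂ)⁻¹) * Matrix.trace (ω * intSigma H ω t) := by
      rw [meanSigma, mul_smul_comm, Matrix.trace_smul, smul_eq_mul]
    rw [hmean, EP.trace_intSigma H ω t, EP.integral_trace_sigma_complex H ω t]
    rw [← Complex.ofReal_inv, Complex.re_ofReal_mul]
    rw [← mul_assoc, mul_inv_cancel₀ ht, one_mul, Complex.sub_re]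
    have := hk t
    linarith
end

section
/- If for every t ∈ ℝ the matrices e^{itH}·ω·e^{-itH} and ω commute, then H and ω commute. -/
open Matrix MeasureTheory Filter Topology
open scoped ComplexOrder

lemma aux_trace_zero {n : ℕ} {A : Matrix (Fin n) (Fin n) ℂ}
    (h : (Aᴴ * A).trace = 0) : A = 0 := by
  have h1 : (↑(∑ i, ∑ j, Complex.normSq (A j i)) : ℂ) = 0 := by
    rw [← h]
    push_cast
    simp only [Matrix.trace, Matrix.diag, Matrix.mul_apply, Matrix.conjTranspose_apply,
      Complex.normSq_eq_conj_mul_self, Complex.star_def]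
  have h2 : ∑ i, ∑ j, Complex.normSq (A j i) = 0 := by exact_mod_cast h1
  have h3 : ∀ i ∈ Finset.univ, ∀ j ∈ Finset.univ, Complex.normSq (A j i) = 0 := by
    have := (Finset.sum_eq_zero_iff_of_nonneg (fun i _ =>
      Finset.sum_nonneg fun j _ => Complex.normSq_nonneg _)).mp h2
    intro i hi j hj
    exact (Finset.sum_eq_zero_iff_of_nonneg
      (fun j _ => Complex.normSq_nonneg _)).mp (this i hi) j hj
  ext i j
  simpa using Complex.normSq_eq_zero.mp (h3 j (Finset.mem_univ _) i (Finset.mem_univ _))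

/-- if `e^{itH} ω e^{-itH}` commutes with `ω` for every `t`, then `H` and `ω`
commute. -/
theorem stmt6 {n : ℕ} (H ω : Matrix (Fin n) (Fin n) ℂ)
    (hH : H.IsHermitian) (hω : ω.PosDef)
    (hcomm : ∀ t : ℝ,
      (mexp ((Complex.I * t) • H) * ω * mexp ((-(Complex.I * t)) • H)) * ω
        = ω * (mexp ((Complex.I * t) • H) * ω * mexp ((-(Complex.I * t)) • H))) :
    H * ω = ω * H := by
  classical
  letI : SeminormedRing (Matrix (Fin n) (Fin n) ℂ) := Matrix.linftyOpSemiNormedRing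
  letI : NormedRing (Matrix (Fin n) (Fin n) ℂ) := Matrix.linftyOpNormedRing
  letI : NormedAlgebra ℝ (Matrix (Fin n) (Fin n) ℂ) := Matrix.linftyOpNormedAlgebra
  letI : NormedAlgebra ℂ (Matrix (Fin n) (Fin n) ℂ) := Matrix.linftyOpNormedAlgebra
  have hexp : ∀ B : Matrix (Fin n) (Fin n) ℂ, mexp B = NormedSpace.exp B := by
    intro B
    unfold mexp; rfl
  set A : Matrix (Fin n) (Fin n) ℂ := Complex.I • H with hA
  have hsmul : ∀ t : ℝ, (Complex.I * (t : ℂ)) • H = t • A := by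
    intro t
    rw [hA, ← Complex.coe_smul, smul_smul, mul_comm]
  have hsmul' : ∀ t : ℝ, (-(Complex.I * (t : ℂ))) • H = t • (-A) := by
    intro t
    rw [smul_neg, ← hsmul t, neg_smul]
  have hg : HasDerivAt (fun t : ℝ => NormedSpace.exp (t • A)) A 0 := by
    have := hasDerivAt_exp_smul_const A (0 : ℝ)
    simp at this ⊢; exact this
  have hh : HasDerivAt (fun t : ℝ => NormedSpace.exp (t • (-A))) (-A) 0 := by
    have := hasDerivAt_exp_smul_const (-A) (0 : ℝ)
    simp at this ⊢; exact this
  set F : ℝ → Matrix (Fin n) (Fin n) ℂ :=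
    fun t => NormedSpace.exp (t • A) * ω * NormedSpace.exp (t • (-A)) with hF
  have hFd : HasDerivAt F (A * ω - ω * A) 0 := by
    have := (hg.mul_const ω).mul hh
    simp only [zero_smul, NormedSpace.exp_zero, one_mul, mul_one, mul_neg, sub_eq_add_neg]
      at this ⊢; exact this
  have hF1 : HasDerivAt (fun t => F t * ω) ((A * ω - ω * A) * ω) 0 := hFd.mul_const ω
  have hF2 : HasDerivAt (fun t => ω * F t) (ω * (A * ω - ω * A)) 0 := hFd.const_mul ω
  have hfun : (fun t => F t * ω) = fun t => ω * F t := by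
    funext t
    have := hcomm t
    rw [hexp, hexp, hsmul t, hsmul' t] at this
    simpa [hF] using this
  have hD : (A * ω - ω * A) * ω = ω * (A * ω - ω * A) := (hfun ▸ hF1).unique hF2
  set K : Matrix (Fin n) (Fin n) ℂ := H * ω - ω * H with hK
  have hAK : A * ω - ω * A = Complex.I • K := by
    rw [hA, hK, Matrix.smul_mul, Matrix.mul_smul, smul_sub]
  have hKω : K * ω = ω * K := by
    rw [hAK] at hD
    rw [Matrix.smul_mul, Matrix.mul_smul] at hD
    exact smul_right_injective (Matrix (Fin n) (Fin n) ℂ) Complex.I_ne_zero hD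
  have hKH : Kᴴ = -K := by
    rw [hK, Matrix.conjTranspose_sub, Matrix.conjTranspose_mul, Matrix.conjTranspose_mul,
      hH.eq, hω.isHermitian.eq, neg_sub]
  have htr : (Kᴴ * K).trace = 0 := by
    rw [hKH, Matrix.neg_mul, Matrix.trace_neg, neg_eq_zero]
    have hKK : K * K = K * H * ω - ω * (K * H) := by
      calc K * K = K * (H * ω) - K * (ω * H) := by rw [hK, mul_sub]
        _ = K * H * ω - K * ω * H := by rw [← mul_assoc, ← mul_assoc]
        _ = K * H * ω - ω * (K * H) := by rw [hKω, mul_assoc ω K H]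
    rw [hKK, Matrix.trace_sub, Matrix.trace_mul_comm ω (K * H), sub_self]
  have hK0 : K = 0 := aux_trace_zero htr
  rw [hK] at hK0
  exact sub_eq_zero.mp hK0
end

section
/- Let λ ∈ ℝ, r > 0, and let f(z) = Σ_{n≥0} c_n·(z-λ)^n be a power series with complex coefficients converging absolutely for |z-λ| < r. Let δ > 0 and let F : (-δ,δ) → {Hermitian n×n complex matrices} be differentiable at 0 with derivative F'(0), and suppose every eigenvalue of F(0) lies in the open interval (λ-r, λ+r). Define tr f(F(α)) := Σ_{n≥0} c_n·tr((F(α) - λ·I)^n) (this series converges absolutely for all α sufficiently close to 0). Then the function α ↦ tr f(F(α)) is differentiable at α = 0 with derivative tr( f'(F(0))·F'(0) ), where f'(F(0)) := Σ_{n≥1} n·c_n·(F(0) - λ·I)^{n-1}. -/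
open Matrix MeasureTheory Filter Topology
open scoped ComplexOrder

attribute [local instance] Matrix.normedAddCommGroup Matrix.normedSpace


section mxSec

variable {n : ℕ}

private abbrev Mx (n : ℕ) := Matrix (Fin n) (Fin n) ℂ

private noncomputable abbrev mxTopology : TopologicalSpace (Mx n) :=
  PseudoMetricSpace.toUniformSpace.toTopologicalSpace

attribute [local instance] mxTopology

private lemma mul_bound (A B : Mx n) : ‖A * B‖ ≤ (n : ℝ) * ‖A‖ * ‖B‖ := by
  rcases Nat.eq_zero_or_pos n with h | h
  · subst h
    have : A * B = 0 := by ext i; exact absurd i.2 (by omega)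
    simp [this, norm_nonneg, mul_nonneg]
  · rw [Matrix.norm_le_iff (by positivity)]
    intro i j
    calc ‖(A * B) i j‖ = ‖∑ k, A i k * B k j‖ := by rfl
    _ ≤ ∑ k, ‖A i k * B k j‖ := norm_sum_le _ _
    _ ≤ ∑ _k : Fin n, ‖A‖ * ‖B‖ := by
        refine Finset.sum_le_sum fun k _ => ?_
        rw [norm_mul]
        exact mul_le_mul (A.norm_entry_le_entrywise_sup_norm)
          (B.norm_entry_le_entrywise_sup_norm) (norm_nonneg _) (norm_nonneg _)
    _ = (n : ℝ) * ‖A‖ * ‖B‖ := by simp [mul_assoc]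

private lemma ibbm_mul :
    IsBoundedBilinearMap ℝ (fun p : Mx n × Mx n => p.1 * p.2) where
  add_left := fun a b c => add_mul a b c
  smul_left := fun r a b => smul_mul_assoc r a b
  add_right := fun a b c => mul_add a b c
  smul_right := fun r a b => mul_smul_comm r a b
  bound := ⟨(n : ℝ) + 1, by positivity, fun A B => by
    calc ‖A * B‖ ≤ (n : ℝ) * ‖A‖ * ‖B‖ := mul_bound A B
    _ ≤ ((n : ℝ) + 1) * ‖A‖ * ‖B‖ := by
        have := norm_nonneg A; have := norm_nonneg B; nlinarith⟩

private noncomputable def lmulCLM (A : Mx n) : Mx n →L[ℝ] Mx n :=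
  (LinearMap.mulLeft ℝ A).toContinuousLinearMap

private noncomputable def rmulCLM (A : Mx n) : Mx n →L[ℝ] Mx n :=
  (LinearMap.mulRight ℝ A).toContinuousLinearMap

@[simp] private lemma lmulCLM_apply (A B : Mx n) : lmulCLM A B = A * B := rfl
@[simp] private lemma rmulCLM_apply (A B : Mx n) : rmulCLM A B = B * A := rfl

private noncomputable def pderiv (m : ℕ) (A : Mx n) : Mx n →L[ℝ] Mx n :=
  ∑ k ∈ Finset.range m, (rmulCLM (A ^ (m - 1 - k))).comp (lmulCLM (A ^ k))

private lemma pderiv_apply (m : ℕ) (A B : Mx n) :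
    pderiv m A B = ∑ k ∈ Finset.range m, A ^ k * B * A ^ (m - 1 - k) := by
  simp [pderiv, ContinuousLinearMap.sum_apply]

private lemma hasFDerivAt_mpow (m : ℕ) (A : Mx n) :
    HasFDerivAt (fun X : Mx n => X ^ m) (pderiv m A) A := by
  induction m with
  | zero =>
      simp only [pow_zero]
      have : pderiv 0 A = 0 := by ext B; simp [pderiv]
      rw [this]
      exact hasFDerivAt_const _ _
  | succ m ih =>
      have hprod : HasFDerivAt (fun x : Mx n => (x ^ m, x))
          ((pderiv m A).prod (ContinuousLinearMap.id ℝ _)) A := ih.prodMk (hasFDerivAt_id A)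
      have h1 := HasFDerivAt.comp (f := fun x : Mx n => (x ^ m, x))
          (g := fun p : Mx n × Mx n => p.1 * p.2) A
          ((ibbm_mul (n := n)).hasFDerivAt (A ^ m, A)) hprod
      have h2 : ((fun p : Mx n × Mx n => p.1 * p.2) ∘ fun x : Mx n => (x ^ m, x))
          = fun X : Mx n => X ^ (m+1) := by
        funext X; simp [Function.comp, pow_succ]
      rw [h2] at h1
      refine h1.congr_fderiv (Eq.symm ?_)
      ext B : 1
      simp only [pderiv_apply, ContinuousLinearMap.comp_apply, ContinuousLinearMap.prod_apply,
        IsBoundedBilinearMap.deriv_apply, ContinuousLinearMap.coe_id', id_eq]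
      rw [Finset.sum_range_succ, add_comm]
      congr 1
      · simp
      · rw [Finset.sum_mul]
        refine Finset.sum_congr rfl fun k hk => ?_
        rw [Finset.mem_range] at hk
        have he : m + 1 - 1 - k = (m - 1 - k) + 1 := by omega
        rw [he, pow_succ]; noncomm_ring

private noncomputable def traceCLM : Mx n →L[ℝ] ℂ :=
  ((Matrix.traceLinearMap (Fin n) ℂ ℂ).restrictScalars ℝ).toContinuousLinearMap

@[simp] private lemma traceCLM_apply (A : Mx n) : traceCLM A = Matrix.trace A := rfl

private noncomputable def phi (c : ℕ → ℂ) (lam : ℝ) (m : ℕ) (A : Mx n) : Mx n →L[ℝ] ℂ :=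
  ((m : ℂ) * c m) • (traceCLM.comp (lmulCLM ((A - (lam : ℂ) • 1) ^ (m - 1))))

private lemma phi_apply (c : ℕ → ℂ) (lam : ℝ) (m : ℕ) (A B : Mx n) :
    phi c lam m A B = (m : ℂ) * c m * Matrix.trace ((A - (lam : ℂ) • 1) ^ (m - 1) * B) := by
  simp [phi, smul_eq_mul]

private lemma hasFDerivAt_term (c : ℕ → ℂ) (lam : ℝ) (m : ℕ) (A : Mx n) :
    HasFDerivAt (fun X : Mx n => c m * Matrix.trace ((X - (lam : ℂ) • 1) ^ m))
      (phi c lam m A) A := by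
  set G := A - (lam : ℂ) • 1 with hG
  have h0 : HasFDerivAt (fun X : Mx n => X - (lam : ℂ) • 1)
      (ContinuousLinearMap.id ℝ (Mx n)) A := (hasFDerivAt_id A).sub_const _
  have hp := HasFDerivAt.comp (f := fun X : Mx n => X - (lam : ℂ) • 1)
      (g := fun X : Mx n => X ^ m) A (hasFDerivAt_mpow m G) h0
  have ht := (traceCLM (n := n)).hasFDerivAt (x := G ^ m)
  have htr := HasFDerivAt.comp (g := fun Y : Mx n => traceCLM Y) A ht hp
  have hc := htr.const_mul (c m)
  refine hc.congr_fderiv (Eq.symm ?_)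
  ext B : 1
  simp only [phi_apply, ContinuousLinearMap.smul_apply, ContinuousLinearMap.comp_apply,
    ContinuousLinearMap.coe_comp', Function.comp_apply, ContinuousLinearMap.coe_id', id_eq,
    traceCLM_apply, pderiv_apply, smul_eq_mul]
  rw [← hG]
  rw [Matrix.trace_sum]
  have : ∀ k ∈ Finset.range m,
      Matrix.trace (G ^ k * B * G ^ (m - 1 - k)) = Matrix.trace (G ^ (m - 1) * B) := by
    intro k hk
    rw [Finset.mem_range] at hk
    have he : m - 1 - k + k = m - 1 := by omega
    rw [Matrix.trace_mul_cycle, ← pow_add, he]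
  rw [Finset.sum_congr rfl this, Finset.sum_const, Finset.card_range, nsmul_eq_mul]
  ring

open scoped NNReal

private noncomputable def rsum (A : Mx n) : ℝ≥0 := Finset.univ.sup fun i => ∑ j, ‖A i j‖₊

private lemma row_le_rsum (A : Mx n) (i : Fin n) : ∑ j, ‖A i j‖₊ ≤ rsum A := by
  exact Finset.le_sup (f := fun i => ∑ j, ‖A i j‖₊) (Finset.mem_univ i)

private lemma rsum_entry (A : Mx n) (i j : Fin n) : ‖A i j‖₊ ≤ rsum A :=
  le_trans (Finset.single_le_sum (f := fun j => ‖A i j‖₊) (fun _ _ => zero_le)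
    (Finset.mem_univ j)) (row_le_rsum A i)

private lemma rsum_le {A : Mx n} {t : ℝ≥0} (h : ∀ i, ∑ j, ‖A i j‖₊ ≤ t) : rsum A ≤ t :=
  Finset.sup_le fun i _ => h i

private lemma rsum_mul (A B : Mx n) : rsum (A * B) ≤ rsum A * rsum B := by
  refine rsum_le fun i => ?_
  calc ∑ j, ‖(A * B) i j‖₊ ≤ ∑ j, ∑ k, ‖A i k‖₊ * ‖B k j‖₊ := by
        refine Finset.sum_le_sum fun j _ => ?_
        rw [Matrix.mul_apply]
        refine le_trans (nnnorm_sum_le _ _) (Finset.sum_le_sum fun k _ => ?_)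
        exact (nnnorm_mul_le _ _)
  _ = ∑ k, ‖A i k‖₊ * ∑ j, ‖B k j‖₊ := by rw [Finset.sum_comm]; simp [Finset.mul_sum]
  _ ≤ ∑ k, ‖A i k‖₊ * rsum B := by
        refine Finset.sum_le_sum fun k _ => ?_
        exact mul_le_mul_right (row_le_rsum B k) _
  _ = (∑ k, ‖A i k‖₊) * rsum B := by rw [Finset.sum_mul]
  _ ≤ rsum A * rsum B := mul_le_mul_left (row_le_rsum A i) _

private lemma rsum_one : rsum (1 : Mx n) ≤ 1 := by
  refine rsum_le fun i => ?_
  calc ∑ j, ‖(1 : Mx n) i j‖₊ = ∑ j, if i = j then 1 else 0 := by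
        refine Finset.sum_congr rfl fun j _ => ?_
        by_cases h : i = j <;> simp [Matrix.one_apply, h]
  _ ≤ 1 := by simp [Finset.sum_ite_eq]

private lemma rsum_add (A B : Mx n) : rsum (A + B) ≤ rsum A + rsum B := by
  refine rsum_le fun i => ?_
  calc ∑ j, ‖(A + B) i j‖₊ ≤ ∑ j, (‖A i j‖₊ + ‖B i j‖₊) :=
        Finset.sum_le_sum fun j _ => nnnorm_add_le _ _
  _ = (∑ j, ‖A i j‖₊) + ∑ j, ‖B i j‖₊ := Finset.sum_add_distrib
  _ ≤ rsum A + rsum B := add_le_add (row_le_rsum A i) (row_le_rsum B i)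

private lemma rsum_le_nnnorm (A : Mx n) : rsum A ≤ n * ‖A‖₊ := by
  refine rsum_le fun i => ?_
  calc ∑ j, ‖A i j‖₊ ≤ ∑ _j : Fin n, ‖A‖₊ := Finset.sum_le_sum fun j _ => by
        exact A.nnnorm_entry_le_entrywise_sup_nnnorm
  _ = n * ‖A‖₊ := by simp [mul_comm]

private noncomputable def nu (U A : Mx n) : ℝ≥0 := rsum (star U * A * U)

private lemma nu_mul {U : Mx n} (hU : U ∈ Matrix.unitaryGroup (Fin n) ℂ) (A B : Mx n) :
    nu U (A * B) ≤ nu U A * nu U B := by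
  have h1 : U * star U = 1 := (Matrix.mem_unitaryGroup_iff).mp hU
  have : star U * (A * B) * U = (star U * A * U) * (star U * B * U) := by
    calc star U * (A * B) * U = star U * A * (U * star U) * B * U := by rw [h1]; noncomm_ring
    _ = (star U * A * U) * (star U * B * U) := by noncomm_ring
  rw [nu, this]
  exact rsum_mul _ _

private lemma nu_pow {U : Mx n} (hU : U ∈ Matrix.unitaryGroup (Fin n) ℂ) (A : Mx n) (m : ℕ) :
    nu U (A ^ m) ≤ nu U A ^ m := by
  induction m with
  | zero =>
      simp only [pow_zero]
      have h2 : star U * (1 : Mx n) * U = 1 := by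
        rw [mul_one]; exact (Matrix.mem_unitaryGroup_iff').mp hU
      rw [nu, h2]; exact rsum_one
  | succ m ih =>
      calc nu U (A ^ (m+1)) = nu U (A ^ m * A) := by rw [pow_succ]
      _ ≤ nu U (A ^ m) * nu U A := nu_mul hU _ _
      _ ≤ nu U A ^ m * nu U A := mul_le_mul_left ih _
      _ = nu U A ^ (m+1) := by rw [pow_succ]

private lemma entry_le_nu {U : Mx n} (hU : U ∈ Matrix.unitaryGroup (Fin n) ℂ) (A : Mx n)
    (i j : Fin n) : ‖A i j‖₊ ≤ rsum U * rsum (star U) * nu U A := by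
  have h1 : U * star U = 1 := (Matrix.mem_unitaryGroup_iff).mp hU
  have hA : A = U * (star U * A * U) * star U := by
    calc A = (U * star U) * A * (U * star U) := by rw [h1]; noncomm_ring
    _ = U * (star U * A * U) * star U := by noncomm_ring
  calc ‖A i j‖₊ ≤ rsum A := rsum_entry A i j
  _ = rsum (U * (star U * A * U) * star U) := by rw [← hA]
  _ ≤ rsum (U * (star U * A * U)) * rsum (star U) := rsum_mul _ _
  _ ≤ rsum U * rsum (star U * A * U) * rsum (star U) := mul_le_mul_left (rsum_mul _ _) _
  _ = rsum U * rsum (star U) * nu U A := by rw [nu]; ring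

private lemma nu_le_nnnorm (U A : Mx n) :
    nu U A ≤ rsum (star U) * rsum U * (n * ‖A‖₊) := by
  calc nu U A ≤ rsum (star U * A) * rsum U := rsum_mul _ _
  _ ≤ rsum (star U) * rsum A * rsum U := mul_le_mul_left (rsum_mul _ _) _
  _ ≤ rsum (star U) * (n * ‖A‖₊) * rsum U := by
      exact mul_le_mul_left (mul_le_mul_right (rsum_le_nnnorm A) _) _
  _ = rsum (star U) * rsum U * (n * ‖A‖₊) := by ring

private lemma trace_mul_le (C B : Mx n) :
    ‖Matrix.trace (C * B)‖ ≤ (n : ℝ) * (rsum C : ℝ) * ‖B‖ := by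
  have hrow : ∀ i : Fin n, ∑ k, ‖C i k‖ ≤ (rsum C : ℝ) := by
    intro i
    have := row_le_rsum C i
    have h2 : ((∑ k, ‖C i k‖₊ : ℝ≥0) : ℝ) = ∑ k, ‖C i k‖ := by push_cast; rfl
    calc ∑ k, ‖C i k‖ = ((∑ k, ‖C i k‖₊ : ℝ≥0) : ℝ) := h2.symm
    _ ≤ (rsum C : ℝ) := by exact_mod_cast this
  calc ‖Matrix.trace (C * B)‖ ≤ ∑ i, ‖(C * B) i i‖ := by
        rw [Matrix.trace]; exact norm_sum_le _ _
  _ ≤ ∑ i, ∑ k, ‖C i k‖ * ‖B k i‖ := by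
        refine Finset.sum_le_sum fun i _ => ?_
        rw [Matrix.mul_apply]
        exact le_trans (norm_sum_le _ _) (Finset.sum_le_sum fun k _ => norm_mul_le _ _)
  _ ≤ ∑ i, ∑ k, ‖C i k‖ * ‖B‖ := by
        refine Finset.sum_le_sum fun i _ => Finset.sum_le_sum fun k _ => ?_
        exact mul_le_mul_of_nonneg_left (B.norm_entry_le_entrywise_sup_norm) (norm_nonneg _)
  _ = ∑ i, (∑ k, ‖C i k‖) * ‖B‖ := by simp [Finset.sum_mul]
  _ ≤ ∑ _i : Fin n, (rsum C : ℝ) * ‖B‖ := by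
        refine Finset.sum_le_sum fun i _ => ?_
        exact mul_le_mul_of_nonneg_right (hrow i) (norm_nonneg _)
  _ = (n : ℝ) * (rsum C : ℝ) * ‖B‖ := by simp [mul_assoc]

private lemma rsum_le_nu {U : Mx n} (hU : U ∈ Matrix.unitaryGroup (Fin n) ℂ) (A : Mx n) :
    rsum A ≤ rsum U * rsum (star U) * nu U A := by
  have h1 : U * star U = 1 := (Matrix.mem_unitaryGroup_iff).mp hU
  have hA : A = U * (star U * A * U) * star U := by
    calc A = (U * star U) * A * (U * star U) := by rw [h1]; noncomm_ring
    _ = U * (star U * A * U) * star U := by noncomm_ring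
  calc rsum A = rsum (U * (star U * A * U) * star U) := by rw [← hA]
  _ ≤ rsum (U * (star U * A * U)) * rsum (star U) := rsum_mul _ _
  _ ≤ rsum U * rsum (star U * A * U) * rsum (star U) := mul_le_mul_left (rsum_mul _ _) _
  _ = rsum U * rsum (star U) * nu U A := by rw [nu]; ring

private lemma norm_le_rsum (A : Mx n) : ‖A‖ ≤ (rsum A : ℝ) := by
  rw [Matrix.norm_le_iff (rsum A).coe_nonneg]
  intro i j
  exact_mod_cast rsum_entry A i j

private lemma trace_le (C : Mx n) : ‖Matrix.trace C‖ ≤ (n : ℝ) * (rsum C : ℝ) := by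
  calc ‖Matrix.trace C‖ ≤ ∑ i, ‖C i i‖ := by rw [Matrix.trace]; exact norm_sum_le _ _
  _ ≤ ∑ _i : Fin n, (rsum C : ℝ) := Finset.sum_le_sum fun i _ => by
        calc ‖C i i‖ ≤ ‖C‖ := C.norm_entry_le_entrywise_sup_norm
        _ ≤ (rsum C : ℝ) := norm_le_rsum C
  _ = (n : ℝ) * (rsum C : ℝ) := by simp [mul_comm]

private noncomputable def traceC : Mx n →L[ℂ] ℂ :=
  (Matrix.traceLinearMap (Fin n) ℂ ℂ).toContinuousLinearMap

private noncomputable def rmulC (A : Mx n) : Mx n →L[ℂ] Mx n :=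
  (LinearMap.mulRight ℂ A).toContinuousLinearMap

@[simp] private lemma traceC_apply (A : Mx n) : traceC A = Matrix.trace A := rfl
@[simp] private lemma rmulC_apply (A B : Mx n) : rmulC A B = B * A := rfl

private lemma nu_add (U A B : Mx n) : nu U (A + B) ≤ nu U A + nu U B := by
  have h : star U * (A + B) * U = star U * A * U + star U * B * U := by noncomm_ring
  rw [nu, h]
  exact rsum_add _ _

end mxSec

open scoped NNReal

set_option maxHeartbeats 2000000 in
/-- differentiability of `α ↦ tr f(F(α))` for an analytic `f` given by a power
series around `λ` with radius of absolute convergence `r`, and a Hermitian-matrix-valued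
function `F` on `(-δ,δ)` differentiable at `0` whose eigenvalues at `0` lie in `(λ-r, λ+r)`. -/
theorem stmt13 {n : ℕ} (lam r : ℝ) (hr : 0 < r) (c : ℕ → ℂ)
    (hconv : ∀ ρ : ℝ, 0 ≤ ρ → ρ < r → Summable fun m : ℕ => ‖c m‖ * ρ ^ m)
    (δ : ℝ) (hδ : 0 < δ)
    (F : ℝ → Matrix (Fin n) (Fin n) ℂ) (F'0 : Matrix (Fin n) (Fin n) ℂ)
    (hherm : ∀ α ∈ Set.Ioo (-δ) δ, (F α).IsHermitian)
    (hF0 : (F 0).IsHermitian)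
    (hFd : HasDerivWithinAt F F'0 (Set.Ioo (-δ) δ) 0)
    (heig : ∀ i, hF0.eigenvalues i ∈ Set.Ioo (lam - r) (lam + r)) :
    HasDerivWithinAt
      (fun α => ∑' m : ℕ, c m * Matrix.trace ((F α - (lam : ℂ) • 1) ^ m))
      (Matrix.trace
        ((∑' m : ℕ, (((m + 1 : ℕ) : ℂ) * c (m + 1)) • (F 0 - (lam : ℂ) • 1) ^ m) * F'0))
      (Set.Ioo (-δ) δ) 0 := by
  classical
  set G0 : Mx n := F 0 - (lam : ℂ) • 1 with hG0
  set U : Mx n := (hF0.eigenvectorUnitary : Mx n) with hUdef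
  have hU : U ∈ Matrix.unitaryGroup (Fin n) ℂ := (hF0.eigenvectorUnitary).2
  have hU' : star U * U = 1 := (Matrix.mem_unitaryGroup_iff').mp hU
  -- diagonalization of G0
  have hdiagG : star U * G0 * U
      = Matrix.diagonal (fun i => (hF0.eigenvalues i : ℂ) - lam) := by
    have hd := hF0.conjStarAlgAut_star_eigenvectorUnitary
    simp only [Unitary.conjStarAlgAut_apply, Unitary.coe_star, star_star] at hd
    have hsm : star U * ((lam : ℂ) • (1 : Mx n)) * U = (lam : ℂ) • (1 : Mx n) := by
      rw [mul_smul_comm, mul_one, smul_mul_assoc, hU']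
    have hsplit : star U * G0 * U
        = star U * (F 0) * U - star U * ((lam : ℂ) • (1 : Mx n)) * U := by
      rw [hG0]; noncomm_ring
    rw [hsplit, hsm, hd]
    have hone : (lam : ℂ) • (1 : Mx n) = Matrix.diagonal (fun _ => (lam : ℂ)) := by
      ext i j
      by_cases h : i = j <;> simp [Matrix.one_apply, Matrix.diagonal_apply, h]
    rw [hone, Matrix.diagonal_sub]
    rfl
  set rr : ℝ≥0 := ⟨r, hr.le⟩ with hrr
  set ρ0 : ℝ≥0 := nu U G0 with hρ0
  have hρ0r : ρ0 < rr := by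
    have hrrpos : (⊥ : ℝ≥0) < rr := by
      simp only [bot_eq_zero]
      exact_mod_cast hr
    rw [hρ0, nu, hdiagG]
    rw [show rsum (Matrix.diagonal fun i => (hF0.eigenvalues i : ℂ) - lam)
        = Finset.univ.sup fun i => ∑ j, ‖(Matrix.diagonal fun i => (hF0.eigenvalues i : ℂ) - lam) i j‖₊ from rfl]
    rw [Finset.sup_lt_iff hrrpos]
    intro i _
    have hrow : ∑ j, ‖(Matrix.diagonal fun i => (hF0.eigenvalues i : ℂ) - lam) i j‖₊
        = ‖(hF0.eigenvalues i : ℂ) - lam‖₊ := by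
      rw [Finset.sum_eq_single i]
      · simp
      · intro b _ hb
        rw [Matrix.diagonal_apply_ne _ (Ne.symm hb)]
        simp
      · intro h; exact absurd (Finset.mem_univ i) h
    rw [hrow]
    have hv : ((hF0.eigenvalues i : ℂ) - lam) = ((hF0.eigenvalues i - lam : ℝ) : ℂ) := by
      push_cast; ring
    have hnorm : ‖(hF0.eigenvalues i : ℂ) - lam‖ = |hF0.eigenvalues i - lam| := by
      rw [hv, Complex.norm_real, Real.norm_eq_abs]
    have hlt : |hF0.eigenvalues i - lam| < r := by
      rcases heig i with ⟨h1, h2⟩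
      rw [abs_lt]; constructor <;> linarith
    have : ‖(hF0.eigenvalues i : ℂ) - lam‖ < r := by rw [hnorm]; exact hlt
    exact_mod_cast this
  set ρ : ℝ≥0 := (ρ0 + rr) / 2 with hρdef
  set ρ' : ℝ≥0 := (ρ + rr) / 2 with hρ'def
  have hρ0rR : (ρ0 : ℝ) < r := by exact_mod_cast hρ0r
  have hρ0nn : (0 : ℝ) ≤ (ρ0 : ℝ) := ρ0.coe_nonneg
  have hcρ : (ρ : ℝ) = ((ρ0 : ℝ) + r) / 2 := by rw [hρdef]; push_cast; rfl
  have hcρ' : (ρ' : ℝ) = ((ρ : ℝ) + r) / 2 := by rw [hρ'def]; push_cast; rfl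
  have hρ0ρ : ρ0 < ρ := by rw [← NNReal.coe_lt_coe, hcρ]; linarith
  have hρρ' : ρ < ρ' := by rw [← NNReal.coe_lt_coe, hcρ', hcρ]; linarith
  have hρ'r : (ρ' : ℝ) < r := by rw [hcρ', hcρ]; linarith
  have hρpos : 0 < (ρ : ℝ) := by rw [hcρ]; linarith
  have hρ'pos : 0 < (ρ' : ℝ) := by rw [hcρ', hcρ]; linarith
  set K : ℝ≥0 := rsum (star U) * rsum U * n with hK
  have hnuK : ∀ A : Mx n, nu U A ≤ K * ‖A‖₊ := by
    intro A
    calc nu U A ≤ rsum (star U) * rsum U * (n * ‖A‖₊) := nu_le_nnnorm U A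
    _ = K * ‖A‖₊ := by rw [hK]; ring
  set ε : ℝ≥0 := (ρ - ρ0) / (K + 1) with hε
  have hεpos : (0 : ℝ) < ε := by
    have h1 : 0 < ρ - ρ0 := tsub_pos_of_lt hρ0ρ
    have : (0 : ℝ≥0) < ε := by positivity
    exact_mod_cast this
  set s : Set (Mx n) := Metric.ball (F 0) (ε : ℝ) with hsdef
  have hmem0 : F 0 ∈ s := Metric.mem_ball_self hεpos
  -- key spectral bound on the ball
  have hnuone : ∀ A ∈ s, nu U (A - (lam : ℂ) • 1) ≤ ρ := by
    intro A hA
    have hsplit : A - (lam : ℂ) • 1 = G0 + (A - F 0) := by rw [hG0]; abel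
    have hdist : ‖A - F 0‖₊ ≤ ε := by
      have : dist A (F 0) < (ε : ℝ) := Metric.mem_ball.mp hA
      rw [dist_eq_norm] at this
      exact_mod_cast this.le
    have hnu2 : nu U (A - F 0) ≤ K * ε := by
      calc nu U (A - F 0) ≤ K * ‖A - F 0‖₊ := hnuK _
      _ ≤ K * ε := mul_le_mul_right hdist _
    have hKε : K * ε ≤ ρ - ρ0 := by
      rw [hε]
      calc K * ((ρ - ρ0) / (K + 1)) ≤ (K + 1) * ((ρ - ρ0) / (K + 1)) :=
            mul_le_mul_left (self_le_add_right K 1) _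
      _ = ρ - ρ0 := by
            rw [mul_div_assoc']
            exact mul_div_cancel_left₀ _ (by positivity)
    calc nu U (A - (lam : ℂ) • 1) = nu U (G0 + (A - F 0)) := by rw [← hsplit]
    _ ≤ nu U G0 + nu U (A - F 0) := nu_add U _ _
    _ ≤ ρ0 + (ρ - ρ0) := add_le_add le_rfl (hnu2.trans hKε)
    _ = ρ := add_tsub_cancel_of_le hρ0ρ.le
  have hnuball : ∀ A ∈ s, ∀ m : ℕ, nu U ((A - (lam : ℂ) • 1) ^ m) ≤ ρ ^ m := by
    intro A hA m
    calc nu U ((A - (lam : ℂ) • 1) ^ m) ≤ nu U (A - (lam : ℂ) • 1) ^ m := nu_pow hU _ m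
    _ ≤ ρ ^ m := pow_le_pow_left' (hnuone A hA) m
  set CU : ℝ≥0 := rsum U * rsum (star U) with hCU
  have hrsum_pow : ∀ A ∈ s, ∀ m : ℕ, rsum ((A - (lam : ℂ) • 1) ^ m) ≤ CU * ρ ^ m := by
    intro A hA m
    calc rsum ((A - (lam : ℂ) • 1) ^ m)
        ≤ rsum U * rsum (star U) * nu U ((A - (lam : ℂ) • 1) ^ m) := rsum_le_nu hU _
    _ ≤ CU * ρ ^ m := by rw [hCU]; exact mul_le_mul_right (hnuball A hA m) _
  -- bound for the derivatives
  set u : ℕ → ℝ := fun m => (m : ℝ) * ‖c m‖ * ((n : ℝ) * ((CU : ℝ) * (ρ : ℝ) ^ (m - 1))) with hu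
  have hφbound : ∀ m : ℕ, ∀ A ∈ s, ‖phi c lam m A‖ ≤ u m := by
    intro m A hA
    refine ContinuousLinearMap.opNorm_le_bound _ (by rw [hu]; positivity) fun B => ?_
    rw [phi_apply]
    have hrs : (rsum ((A - (lam : ℂ) • 1) ^ (m - 1)) : ℝ) ≤ (CU : ℝ) * (ρ : ℝ) ^ (m - 1) := by
      exact_mod_cast hrsum_pow A hA (m - 1)
    calc ‖(m : ℂ) * c m * Matrix.trace ((A - (lam : ℂ) • 1) ^ (m - 1) * B)‖
        = (m : ℝ) * ‖c m‖ * ‖Matrix.trace ((A - (lam : ℂ) • 1) ^ (m - 1) * B)‖ := by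
          rw [norm_mul, norm_mul, Complex.norm_natCast]
    _ ≤ (m : ℝ) * ‖c m‖ * ((n : ℝ) * (rsum ((A - (lam : ℂ) • 1) ^ (m - 1)) : ℝ) * ‖B‖) := by
          refine mul_le_mul_of_nonneg_left (trace_mul_le _ _) (by positivity)
    _ ≤ (m : ℝ) * ‖c m‖ * ((n : ℝ) * ((CU : ℝ) * (ρ : ℝ) ^ (m - 1)) * ‖B‖) := by
          refine mul_le_mul_of_nonneg_left ?_ (by positivity)
          refine mul_le_mul_of_nonneg_right (mul_le_mul_of_nonneg_left hrs (by positivity)) (norm_nonneg _)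
    _ = u m * ‖B‖ := by rw [hu]; ring
  -- summability of u
  obtain ⟨Cb, hCb1, hCb⟩ : ∃ Cb : ℝ, 1 ≤ Cb ∧
      ∀ m : ℕ, ((m : ℝ) + 1) * ((ρ : ℝ) / ρ') ^ m ≤ Cb := by
    set x : ℝ := (ρ : ℝ) / ρ' with hxdef
    have hx0 : 0 ≤ x := by positivity
    have hx1 : x < 1 := by
      rw [hxdef, div_lt_one hρ'pos]
      exact_mod_cast hρρ'
    have hgeom : Summable fun m : ℕ => ((m : ℝ) + 1) * x ^ m := by
      have h1 := summable_pow_mul_geometric_of_norm_lt_one (R := ℝ) 1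
        (r := x) (by rwa [Real.norm_of_nonneg hx0])
      have h2 := summable_geometric_of_lt_one hx0 hx1
      refine Summable.congr (h1.add h2) fun m => ?_
      simp [pow_one]; ring
    have htend : Filter.Tendsto (fun m : ℕ => ((m : ℝ) + 1) * x ^ m) Filter.atTop (nhds 0) :=
      hgeom.tendsto_atTop_zero
    obtain ⟨Cb0, hCb0⟩ := htend.bddAbove_range
    refine ⟨max Cb0 1, le_max_right _ _, fun m => ?_⟩
    exact le_trans (hCb0 (Set.mem_range_self m)) (le_max_left _ _)
  have hpowkey : ∀ m : ℕ, ((m : ℝ) + 1) * (ρ : ℝ) ^ m ≤ Cb * (ρ' : ℝ) ^ m := by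
    intro m
    have := hCb m
    have hxm : ((ρ : ℝ) / ρ') ^ m = (ρ : ℝ) ^ m / (ρ' : ℝ) ^ m := div_pow _ _ _
    rw [hxm] at this
    have hp : (0 : ℝ) < (ρ' : ℝ) ^ m := by positivity
    rw [← mul_div_assoc, div_le_iff₀ hp] at this
    linarith [this]
  have h1 : Summable fun m : ℕ => ‖c m‖ * (ρ' : ℝ) ^ m :=
    hconv ρ' (by positivity) hρ'r
  have hmρ : ∀ m : ℕ, (m : ℝ) * (ρ : ℝ) ^ (m - 1) ≤ (Cb / (ρ' : ℝ)) * (ρ' : ℝ) ^ m := by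
    intro m
    cases m with
    | zero => simp; positivity
    | succ m =>
        have h2 : (Cb / (ρ' : ℝ)) * (ρ' : ℝ) ^ (m + 1) = Cb * (ρ' : ℝ) ^ m := by
          rw [pow_succ]; field_simp
        rw [h2, Nat.add_sub_cancel]
        push_cast
        exact hpowkey m
  have hsummu : Summable u := by
    refine Summable.of_nonneg_of_le (fun m => by rw [hu]; positivity)
      (fun m => ?_) ((h1.mul_left ((n : ℝ) * (CU : ℝ) * (Cb / (ρ' : ℝ)))))
    have step : ‖c m‖ * ((m : ℝ) * (ρ : ℝ) ^ (m - 1)) ≤ ‖c m‖ * ((Cb / (ρ' : ℝ)) * (ρ' : ℝ) ^ m) :=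
      mul_le_mul_of_nonneg_left (hmρ m) (norm_nonneg _)
    calc u m = ((n : ℝ) * (CU : ℝ)) * (‖c m‖ * ((m : ℝ) * (ρ : ℝ) ^ (m - 1))) := by rw [hu]; ring
    _ ≤ ((n : ℝ) * (CU : ℝ)) * (‖c m‖ * ((Cb / (ρ' : ℝ)) * (ρ' : ℝ) ^ m)) := by
        refine mul_le_mul_of_nonneg_left step (by positivity)
    _ = (n : ℝ) * (CU : ℝ) * (Cb / (ρ' : ℝ)) * (‖c m‖ * (ρ' : ℝ) ^ m) := by ring
  have hupos : ∀ m, 0 ≤ u m := by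
    intro m; rw [hu]; positivity
  -- summability at the center
  have hρr : (ρ : ℝ) < r := by rw [hcρ]; linarith
  have hf0 : Summable fun m : ℕ => c m * Matrix.trace ((F 0 - (lam : ℂ) • 1) ^ m) := by
    refine Summable.of_norm_bounded (g := fun m => ((n : ℝ) * (CU : ℝ)) * (‖c m‖ * (ρ : ℝ) ^ m))
      ((hconv ρ (by positivity) hρr).mul_left _) fun m => ?_
    have hrs : (rsum ((F 0 - (lam : ℂ) • 1) ^ m) : ℝ) ≤ (CU : ℝ) * (ρ : ℝ) ^ m := by
      exact_mod_cast hrsum_pow (F 0) hmem0 m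
    calc ‖c m * Matrix.trace ((F 0 - (lam : ℂ) • 1) ^ m)‖
        = ‖c m‖ * ‖Matrix.trace ((F 0 - (lam : ℂ) • 1) ^ m)‖ := norm_mul _ _
    _ ≤ ‖c m‖ * ((n : ℝ) * (rsum ((F 0 - (lam : ℂ) • 1) ^ m) : ℝ)) :=
        mul_le_mul_of_nonneg_left (trace_le _) (norm_nonneg _)
    _ ≤ ‖c m‖ * ((n : ℝ) * ((CU : ℝ) * (ρ : ℝ) ^ m)) := by
        refine mul_le_mul_of_nonneg_left (mul_le_mul_of_nonneg_left hrs (by positivity)) (norm_nonneg _)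
    _ = ((n : ℝ) * (CU : ℝ)) * (‖c m‖ * (ρ : ℝ) ^ m) := by ring
  -- the main fderiv statement
  have key : HasFDerivAt (fun A : Mx n => ∑' m : ℕ, c m * Matrix.trace ((A - (lam : ℂ) • 1) ^ m))
      (∑' m : ℕ, phi c lam m (F 0)) (F 0) :=
    hasFDerivAt_tsum_of_isPreconnected hsummu Metric.isOpen_ball
      (convex_ball _ _).isPreconnected
      (fun m A _ => hasFDerivAt_term c lam m A) hφbound hmem0 hf0 hmem0
  have hcomp := key.comp_hasDerivWithinAt 0 hFd
  refine hcomp.congr_deriv (Eq.symm ?_)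
  -- identify the derivative
  have hφsum : Summable fun m : ℕ => phi c lam m (F 0) :=
    Summable.of_norm_bounded (g := u) hsummu (fun m => hφbound m (F 0) hmem0)
  have happly : (∑' m : ℕ, phi c lam m (F 0)) F'0 = ∑' m : ℕ, phi c lam m (F 0) F'0 := by
    have h := (ContinuousLinearMap.apply ℝ ℂ F'0).map_tsum hφsum
    simpa using h
  have hsum2 : Summable fun m : ℕ => phi c lam m (F 0) F'0 := by
    have h := (hφsum.hasSum.mapL (ContinuousLinearMap.apply ℝ ℂ F'0)).summable
    refine h.congr fun m => ?_
    simp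
  set S : ℕ → Mx n := fun m => (((m + 1 : ℕ) : ℂ) * c (m + 1)) • (F 0 - (lam : ℂ) • 1) ^ m
    with hS
  have hSsum : Summable S := by
    refine Summable.of_norm_bounded
      (g := fun m => ((CU : ℝ) * Cb / (ρ' : ℝ)) * (‖c (m + 1)‖ * (ρ' : ℝ) ^ (m + 1)))
      ((((summable_nat_add_iff 1).mpr h1)).mul_left _) fun m => ?_
    have hrs : ‖(F 0 - (lam : ℂ) • 1) ^ m‖ ≤ (CU : ℝ) * (ρ : ℝ) ^ m := by
      refine (norm_le_rsum _).trans ?_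
      exact_mod_cast hrsum_pow (F 0) hmem0 m
    have hkey := hpowkey m
    calc ‖S m‖ = ‖((m + 1 : ℕ) : ℂ) * c (m + 1)‖ * ‖(F 0 - (lam : ℂ) • 1) ^ m‖ := norm_smul _ _
    _ = ((m : ℝ) + 1) * ‖c (m + 1)‖ * ‖(F 0 - (lam : ℂ) • 1) ^ m‖ := by
        rw [norm_mul, Complex.norm_natCast]; push_cast; ring
    _ ≤ ((m : ℝ) + 1) * ‖c (m + 1)‖ * ((CU : ℝ) * (ρ : ℝ) ^ m) := by
        refine mul_le_mul_of_nonneg_left hrs (by positivity)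
    _ = (CU : ℝ) * ‖c (m + 1)‖ * (((m : ℝ) + 1) * (ρ : ℝ) ^ m) := by ring
    _ ≤ (CU : ℝ) * ‖c (m + 1)‖ * (Cb * (ρ' : ℝ) ^ m) := by
        refine mul_le_mul_of_nonneg_left hkey (by positivity)
    _ = ((CU : ℝ) * Cb / (ρ' : ℝ)) * (‖c (m + 1)‖ * (ρ' : ℝ) ^ (m + 1)) := by
        rw [pow_succ]; field_simp
  have hE := ((traceC (n := n)).comp (rmulC F'0)).map_tsum hSsum
  have hφ0 : phi c lam 0 (F 0) F'0 = 0 := by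
    rw [phi_apply]; simp
  calc Matrix.trace ((∑' m : ℕ, S m) * F'0)
      = ((traceC (n := n)).comp (rmulC F'0)) (∑' m : ℕ, S m) := rfl
  _ = ∑' m : ℕ, ((traceC (n := n)).comp (rmulC F'0)) (S m) := hE
  _ = ∑' m : ℕ, phi c lam (m + 1) (F 0) F'0 := by
      refine tsum_congr fun m => ?_
      rw [phi_apply, hS]
      simp only [ContinuousLinearMap.comp_apply, traceC_apply, rmulC_apply, Nat.add_sub_cancel,
        Matrix.smul_mul, Matrix.trace_smul, smul_eq_mul]
  _ = phi c lam 0 (F 0) F'0 + ∑' m : ℕ, phi c lam (m + 1) (F 0) F'0 := by rw [hφ0, zero_add]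
  _ = ∑' m : ℕ, phi c lam m (F 0) F'0 := (hsum2.tsum_eq_zero_add).symm
  _ = (∑' m : ℕ, phi c lam m (F 0)) F'0 := happly.symm
end

section
/- Let X be a complex Banach space, let (h_M)_{M∈ℕ} be a sequence of bounded linear operators on X and let h be a bounded linear operator on X such that sup_M ‖h_M‖ < ∞ and h_M ψ → h ψ as M → ∞ for every ψ ∈ X (strong convergence). Then for every ψ ∈ X and every T > 0, sup_{t ∈ [-T,T]} ‖ exp(i t h_M) ψ - exp(i t h) ψ ‖ → 0 as M → ∞. -/
open Filter Topology

/-- if `(h_M)` is a uniformly bounded sequence of bounded operators on a Banach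
space converging strongly to `h`, then `e^{ith_M}ψ → e^{ith}ψ` uniformly for `t` in compact
intervals. -/
theorem stmt18 {X : Type*} [NormedAddCommGroup X] [NormedSpace ℂ X] [CompleteSpace X]
    (hM : ℕ → X →L[ℂ] X) (h : X →L[ℂ] X)
    (hbd : ∃ C : ℝ, ∀ M : ℕ, ‖hM M‖ ≤ C)
    (hstrong : ∀ ψ : X, Tendsto (fun M => hM M ψ) atTop (nhds (h ψ)))
    (ψ : X) (T : ℝ) (hT : 0 < T) :
    TendstoUniformlyOn
      (fun (M : ℕ) (t : ℝ) => NormedSpace.exp ((Complex.I * (t : ℂ)) • hM M) ψ)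
      (fun t : ℝ => NormedSpace.exp ((Complex.I * (t : ℂ)) • h) ψ)
      atTop (Set.Icc (-T) T) := by
  obtain ⟨C, hC⟩ := hbd
  set K : ℝ := max C ‖h‖ with hKdef
  have hK0 : 0 ≤ K := le_max_of_le_right (norm_nonneg h)
  have hKM : ∀ M, ‖hM M‖ ≤ K := fun M => (hC M).trans (le_max_left _ _)
  have hKh : ‖h‖ ≤ K := le_max_right _ _
  -- strong convergence of powers
  have hpow : ∀ n : ℕ, Tendsto (fun M => (hM M ^ n) ψ) atTop (𝓝 ((h ^ n) ψ)) := by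
    intro n
    induction n with
    | zero => simp only [pow_zero]; exact tendsto_const_nhds
    | succ n ih =>
      rw [tendsto_iff_norm_sub_tendsto_zero] at ih ⊢
      have h2 : Tendsto (fun M => ‖hM M ((h ^ n) ψ) - h ((h ^ n) ψ)‖) atTop (𝓝 0) :=
        tendsto_iff_norm_sub_tendsto_zero.mp (hstrong ((h ^ n) ψ))
      have key : ∀ M, ‖(hM M ^ (n+1)) ψ - (h ^ (n+1)) ψ‖ ≤
          K * ‖(hM M ^ n) ψ - (h ^ n) ψ‖ + ‖hM M ((h ^ n) ψ) - h ((h ^ n) ψ)‖ := by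
        intro M
        have e1 : (hM M ^ (n+1)) ψ - (h ^ (n+1)) ψ
            = hM M ((hM M ^ n) ψ - (h ^ n) ψ) + (hM M ((h ^ n) ψ) - h ((h ^ n) ψ)) := by
          simp only [pow_succ', ContinuousLinearMap.mul_apply, map_sub]
          abel
        rw [e1]
        refine (norm_add_le _ _).trans (add_le_add_left ?_ _)
        exact (ContinuousLinearMap.le_opNorm _ _).trans
          (mul_le_mul_of_nonneg_right (hKM M) (norm_nonneg _))
      have hlim : Tendsto (fun M => K * ‖(hM M ^ n) ψ - (h ^ n) ψ‖
          + ‖hM M ((h ^ n) ψ) - h ((h ^ n) ψ)‖) atTop (𝓝 0) := by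
        have := (ih.const_mul K).add h2
        simpa using this
      exact squeeze_zero (fun M => norm_nonneg _) key hlim
  -- series expansion
  have hexp : ∀ (A : X →L[ℂ] X) (t : ℝ),
      HasSum (fun n => ((n.factorial : ℂ))⁻¹ • (((Complex.I * (t:ℂ))^n) • ((A^n) ψ)))
        (NormedSpace.exp ((Complex.I * (t:ℂ)) • A) ψ) := by
    intro A t
    have h1 := NormedSpace.exp_series_hasSum_exp' (𝕂 := ℂ) ((Complex.I * (t:ℂ)) • A)
    have h2 := h1.mapL (ContinuousLinearMap.apply ℂ X ψ)
    simpa [smul_pow, smul_smul, mul_comm] using h2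
  -- power norm bound
  have hApow : ∀ (A : X →L[ℂ] X), ‖A‖ ≤ K → ∀ n : ℕ, ‖(A^n) ψ‖ ≤ K^n * ‖ψ‖ := by
    intro A hA n
    induction n with
    | zero => simp
    | succ n ih =>
      rw [pow_succ', ContinuousLinearMap.mul_apply]
      calc ‖A ((A^n) ψ)‖ ≤ ‖A‖ * ‖(A^n) ψ‖ := ContinuousLinearMap.le_opNorm _ _
        _ ≤ K * (K^n * ‖ψ‖) := mul_le_mul hA ih (norm_nonneg _) hK0
        _ = K^(n+1) * ‖ψ‖ := by ring
  set r : ℕ → ℝ := fun n => (T*K)^n / n.factorial * ‖ψ‖ with hrdef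
  have hrsum : Summable r := (Real.summable_pow_div_factorial (T*K)).mul_right _
  have hbound : ∀ (A : X →L[ℂ] X), ‖A‖ ≤ K → ∀ t ∈ Set.Icc (-T) T, ∀ n : ℕ,
      ‖((n.factorial : ℂ))⁻¹ • (((Complex.I * (t:ℂ))^n) • ((A^n) ψ))‖ ≤ r n := by
    intro A hA t ht n
    have htT : |t| ≤ T := abs_le.mpr ⟨ht.1, ht.2⟩
    have e1 : ‖((n.factorial : ℂ))⁻¹ • (((Complex.I * (t:ℂ))^n) • ((A^n) ψ))‖
        = ((n.factorial : ℝ))⁻¹ * (|t|^n * ‖(A^n) ψ‖) := by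
      rw [norm_smul, norm_smul, norm_pow]
      simp [norm_mul, Complex.norm_real, Real.norm_eq_abs, Complex.norm_I]
    rw [e1, hrdef]
    have hfac : (0:ℝ) < n.factorial := by exact_mod_cast n.factorial_pos
    calc ((n.factorial : ℝ))⁻¹ * (|t|^n * ‖(A^n) ψ‖)
        ≤ ((n.factorial : ℝ))⁻¹ * (T^n * (K^n * ‖ψ‖)) := by
          gcongr
          exact hApow A hA n
      _ = (T*K)^n / n.factorial * ‖ψ‖ := by rw [mul_pow]; field_simp
  -- main epsilon argument
  rw [Metric.tendstoUniformlyOn_iff]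
  intro ε hε
  obtain ⟨N, hN⟩ : ∃ N : ℕ, ∑' k, r (k + N) < ε/4 :=
    ((tendsto_sum_nat_add r).eventually_lt_const (by positivity)).exists
  set S : ℝ := ∑ n ∈ Finset.range N, T^n / n.factorial with hSdef
  have hS0 : 0 ≤ S := Finset.sum_nonneg fun n _ => by positivity
  set δ : ℝ := (ε/2) / (S + 1) with hδdef
  have hδpos : 0 < δ := by positivity
  have hev : ∀ᶠ M in atTop, ∀ n ∈ Finset.range N, ‖(hM M ^ n) ψ - (h ^ n) ψ‖ < δ := by
    rw [eventually_all_finset]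
    intro n _
    exact (tendsto_iff_norm_sub_tendsto_zero.mp (hpow n)).eventually_lt_const hδpos
  filter_upwards [hev] with M hMev t ht
  have hA := hexp (hM M) t
  have hB := hexp h t
  have hdiff := hA.sub hB
  rw [dist_eq_norm, norm_sub_rev, ← hdiff.tsum_eq, ← Summable.sum_add_tsum_nat_add N hdiff.summable]
  have htail1 : Summable (fun k => r (k + N)) := (summable_nat_add_iff N).2 hrsum
  have hbig : ‖∑' (k : ℕ),
      (((k+N).factorial : ℂ)⁻¹ • ((Complex.I * (t:ℂ))^(k+N) • ((hM M ^ (k+N)) ψ))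
        - ((k+N).factorial : ℂ)⁻¹ • ((Complex.I * (t:ℂ))^(k+N) • ((h ^ (k+N)) ψ)))‖
      ≤ (∑' k, r (k + N)) + (∑' k, r (k + N)) := by
    refine tsum_of_norm_bounded (htail1.hasSum.add htail1.hasSum) fun k => ?_
    exact (norm_sub_le _ _).trans
      (add_le_add (hbound _ (hKM M) t ht _) (hbound _ hKh t ht _))
  have hsmall : ‖∑ n ∈ Finset.range N,
      (((n.factorial : ℂ))⁻¹ • ((Complex.I * (t:ℂ))^n • ((hM M ^ n) ψ))
        - ((n.factorial : ℂ))⁻¹ • ((Complex.I * (t:ℂ))^n • ((h ^ n) ψ)))‖ < ε/2 := by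
    have h1 : ∀ n ∈ Finset.range N,
        ‖((n.factorial : ℂ))⁻¹ • ((Complex.I * (t:ℂ))^n • ((hM M ^ n) ψ))
          - ((n.factorial : ℂ))⁻¹ • ((Complex.I * (t:ℂ))^n • ((h ^ n) ψ))‖
        ≤ T^n / n.factorial * δ := by
      intro n hn
      have e2 : ((n.factorial : ℂ))⁻¹ • ((Complex.I * (t:ℂ))^n • ((hM M ^ n) ψ))
          - ((n.factorial : ℂ))⁻¹ • ((Complex.I * (t:ℂ))^n • ((h ^ n) ψ))
          = ((n.factorial : ℂ))⁻¹ • ((Complex.I * (t:ℂ))^n • ((hM M ^ n) ψ - (h ^ n) ψ)) := by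
        rw [smul_sub, smul_sub]
      rw [e2, norm_smul, norm_smul, norm_pow]
      have e3 : ‖Complex.I * (t:ℂ)‖ = |t| := by
        simp [norm_mul, Complex.norm_real, Real.norm_eq_abs, Complex.norm_I]
      rw [e3]
      have hfac : (0:ℝ) < n.factorial := by exact_mod_cast n.factorial_pos
      have e4 : ‖((n.factorial : ℂ))⁻¹‖ = ((n.factorial : ℝ))⁻¹ := by simp
      rw [e4]
      have htT : |t| ≤ T := abs_le.mpr ⟨ht.1, ht.2⟩
      calc ((n.factorial : ℝ))⁻¹ * (|t|^n * ‖(hM M ^ n) ψ - (h ^ n) ψ‖)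
          ≤ ((n.factorial : ℝ))⁻¹ * (T^n * δ) := by
            gcongr
            exact (hMev n hn).le
        _ = T^n / n.factorial * δ := by ring
    calc ‖∑ n ∈ Finset.range N, _‖ ≤ ∑ n ∈ Finset.range N,
          ‖((n.factorial : ℂ))⁻¹ • ((Complex.I * (t:ℂ))^n • ((hM M ^ n) ψ))
            - ((n.factorial : ℂ))⁻¹ • ((Complex.I * (t:ℂ))^n • ((h ^ n) ψ))‖ :=
          norm_sum_le _ _
      _ ≤ ∑ n ∈ Finset.range N, T^n / n.factorial * δ := Finset.sum_le_sum h1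
      _ = S * δ := by rw [hSdef, Finset.sum_mul]
      _ < (S + 1) * δ := mul_lt_mul_of_pos_right (lt_add_one S) hδpos
      _ = ε/2 := by rw [hδdef]; field_simp
  calc ‖_ + _‖ ≤ _ := norm_add_le _ _
    _ < ε/2 + ((∑' k, r (k + N)) + (∑' k, r (k + N))) := by
        exact add_lt_add_of_lt_of_le hsmall hbig
    _ < ε/2 + (ε/4 + ε/4) := by linarith
    _ = ε := by ring
end
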